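/- arXiv:2303.18099 — 2 statements merged into one kernel-verified Lean document; each statement's English description precedes it below -/
import Mathlib

section
/- Diagonal (fixed point) lemma: let T be a computably axiomatized extension of Robinson's arithmetic. For every formula C(x) with one free variable there exists a sentence G such that T ⊢ G ↔ C(⌜G⌝), where ⌜G⌝ is the numeral of the Gödel number of G. -/
open FirstOrder FirstOrder.Language

/-- The function symbols of the language of arithmetic: `0`, `S`, `+`, `×`. -/
inductive ArithFunc : ℕ → Type
  | zero : ArithFunc 0
  | succ : ArithFunc 1
  | add : ArithFunc 2
  | mul : ArithFunc 2

/-- The first-order language of arithmetic `{0, S, +, ×, =}` (equality is built in). -/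
def LA : FirstOrder.Language := ⟨ArithFunc, fun _ => Empty⟩

instance : Encodable (Σ n, LA.Functions n) :=
  Encodable.ofLeftInverse
    (fun f => match f with
      | ⟨_, .zero⟩ => 0 | ⟨_, .succ⟩ => 1 | ⟨_, .add⟩ => 2 | ⟨_, .mul⟩ => 3)
    (fun n => match n with
      | 0 => ⟨0, .zero⟩ | 1 => ⟨1, .succ⟩ | 2 => ⟨2, .add⟩ | _ => ⟨2, .mul⟩)
    (fun f => by rcases f with ⟨_, f⟩; cases f <;> rfl)

instance (n : ℕ) : Encodable (LA.Relations n) := inferInstanceAs (Encodable Empty)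

/-- The term `0`. -/
def zeroT {α : Type} : LA.Term α := Term.func ArithFunc.zero ![]
/-- The successor of a term. -/
def succT {α : Type} (t : LA.Term α) : LA.Term α := Term.func ArithFunc.succ ![t]
/-- The sum of two terms. -/
def addT {α : Type} (t s : LA.Term α) : LA.Term α := Term.func ArithFunc.add ![t, s]
/-- The product of two terms. -/
def mulT {α : Type} (t s : LA.Term α) : LA.Term α := Term.func ArithFunc.mul ![t, s]

/-- The numeral `n̄ = Sⁿ(0)`. -/
def num {α : Type} : ℕ → LA.Term α
  | 0 => zeroT
  | n + 1 => succT (num n)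

/-- Robinson's arithmetic `Q`. -/
def Q : LA.Theory :=
  { ∀' ∼(succT &0 =' zeroT),
    ∀' ∀' (succT &0 =' succT &1 ⟹ &0 =' &1),
    ∀' ((&0 =' zeroT) ⊔ ∃' (&0 =' succT &1)),
    ∀' (addT &0 zeroT =' &0),
    ∀' ∀' (addT &0 (succT &1) =' succT (addT &0 &1)),
    ∀' (mulT &0 zeroT =' zeroT),
    ∀' ∀' (mulT &0 (succT &1) =' addT (mulT &0 &1) &0) }

/-- The standard model `ℕ` of arithmetic. -/
instance : LA.Structure ℕ where
  funMap {_} f := match f with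
    | .zero => fun _ => 0
    | .succ => fun v => v 0 + 1
    | .add => fun v => v 0 + v 1
    | .mul => fun v => v 0 * v 1
  RelMap {_} r := Empty.elim r

/-- The Gödel number of a sentence, via Mathlib's encoding of first-order formulas. -/
def gnum (φ : LA.Sentence) : ℕ := Encodable.encode (BoundedFormula.listEncode φ)

/-- A theory is computably axiomatized when its set of (Gödel numbers of) axioms is
decidable. -/
def ComputablyAxiomatized (T : LA.Theory) : Prop :=
  ComputablePred fun n : ℕ => ∃ φ ∈ T, gnum φ = n

set_option linter.unusedSectionVars false
section QModels

open FirstOrder.Language.Structure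

variable {M : Type} [LA.Structure M]

/-- zero of a model -/
def mz (M : Type) [LA.Structure M] : M := funMap (L := LA) ArithFunc.zero ![]
/-- successor in a model -/
def ms (a : M) : M := funMap (L := LA) ArithFunc.succ ![a]
/-- addition in a model -/
def ma (a b : M) : M := funMap (L := LA) ArithFunc.add ![a, b]
/-- multiplication in a model -/
def mm (a b : M) : M := funMap (L := LA) ArithFunc.mul ![a, b]

/-- the standard numeral interpreted in a model -/
def std : ℕ → M := fun n => Nat.rec (mz M) (fun _ r => ms r) n

@[simp] lemma std_zero : (std 0 : M) = mz M := rfl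
@[simp] lemma std_succ (n : ℕ) : (std (n+1) : M) = ms (std n) := rfl

/-- The axioms of Robinson arithmetic, as facts about a structure. -/
structure QM (M : Type) [LA.Structure M] : Prop where
  ax1 : ∀ a : M, ms a ≠ mz M
  ax2 : ∀ a b : M, ms a = ms b → a = b
  ax3 : ∀ a : M, a = mz M ∨ ∃ b, a = ms b
  ax4 : ∀ a : M, ma a (mz M) = a
  ax5 : ∀ a b : M, ma a (ms b) = ms (ma a b)
  ax6 : ∀ a : M, mm a (mz M) = mz M
  ax7 : ∀ a b : M, mm a (ms b) = ma (mm a b) a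

/-- iterated successor -/
def sIter (n : ℕ) (a : M) : M := Nat.rec a (fun _ r => ms r) n

@[simp] lemma sIter_zero (a : M) : sIter 0 a = a := rfl
@[simp] lemma sIter_succ (n : ℕ) (a : M) : sIter (n+1) a = ms (sIter n a) := rfl

lemma std_eq_sIter (n : ℕ) : (std n : M) = sIter n (mz M) := by
  induction n with
  | zero => rfl
  | succ n ih => simp [ih]

namespace QM

variable (hq : QM M)
include hq

lemma ma_std (a : M) (n : ℕ) : ma a (std n) = sIter n a := by
  induction n with
  | zero => simpa using hq.ax4 a
  | succ n ih => simp [hq.ax5, ih]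

lemma sIter_ms (n : ℕ) (a : M) : sIter n (ms a) = ms (sIter n a) := by
  induction n with
  | zero => rfl
  | succ n ih => simp [ih]

lemma std_add (m n : ℕ) : (std (m + n) : M) = ma (std m) (std n) := by
  rw [hq.ma_std]
  induction n with
  | zero => rfl
  | succ n ih => exact congrArg ms ih

lemma std_mul (m n : ℕ) : (std (m * n) : M) = mm (std m) (std n) := by
  induction n with
  | zero => simpa using (hq.ax6 (std m)).symm
  | succ n ih =>
    rw [Nat.mul_succ, hq.std_add, ih, show (std (n+1) : M) = ms (std n) from rfl, hq.ax7]

lemma std_inj : ∀ m n : ℕ, (std m : M) = std n → m = n := by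
  intro m
  induction m with
  | zero =>
    intro n h
    cases n with
    | zero => rfl
    | succ n => exact absurd h.symm (hq.ax1 _)
  | succ m ih =>
    intro n h
    cases n with
    | zero => exact absurd h (hq.ax1 _)
    | succ n => exact congrArg Nat.succ (ih n (hq.ax2 _ _ h))

lemma std_le : ∀ (n : ℕ) (a c : M), ma c a = std n → ∃ k, k ≤ n ∧ a = std k := by
  intro n
  induction n with
  | zero =>
    intro a c h
    rcases hq.ax3 a with rfl | ⟨b, rfl⟩
    · exact ⟨0, le_refl _, rfl⟩
    · rw [hq.ax5] at h
      exact absurd h (hq.ax1 _)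
  | succ n ih =>
    intro a c h
    rcases hq.ax3 a with rfl | ⟨b, rfl⟩
    · exact ⟨0, Nat.zero_le _, rfl⟩
    · rw [hq.ax5] at h
      obtain ⟨k, hk, rfl⟩ := ih b c (hq.ax2 _ _ h)
      exact ⟨k+1, Nat.succ_le_succ hk, rfl⟩

end QM

/-- `≤` in a model -/
def mLE (a b : M) : Prop := ∃ c, ma c a = b
/-- `<` in a model -/
def mLT (a b : M) : Prop := ∃ c, ma c (ms a) = b

namespace QM
variable (hq : QM M)
include hq

lemma mLE_std_std {k n : ℕ} (h : k ≤ n) : mLE (std k : M) (std n) :=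
  ⟨std (n - k), by rw [← hq.std_add, Nat.sub_add_cancel h]⟩

lemma mLT_std_std {k n : ℕ} (h : k < n) : mLT (std k : M) (std n) :=
  ⟨std (n - (k+1)), by rw [← std_succ, ← hq.std_add, Nat.sub_add_cancel h]⟩

lemma mLE_std {a : M} {n : ℕ} (h : mLE a (std n)) : ∃ k, k ≤ n ∧ a = std k := by
  obtain ⟨c, hc⟩ := h
  exact hq.std_le n a c hc

lemma mLT_std {a : M} {n : ℕ} (h : mLT a (std n)) : ∃ k, k < n ∧ a = std k := by
  obtain ⟨c, hc⟩ := h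
  obtain ⟨k, hk, hk2⟩ := hq.std_le n (ms a) c hc
  cases k with
  | zero => exact absurd hk2 (hq.ax1 _)
  | succ j =>
    exact ⟨j, Nat.lt_of_succ_le hk, hq.ax2 _ _ hk2⟩

/-- trichotomy at standard numerals -/
lemma tri : ∀ (n : ℕ) (a : M), mLE a (std n) ∨ mLT (std n) a := by
  intro n
  induction n with
  | zero =>
    intro a
    rcases hq.ax3 a with rfl | ⟨b, rfl⟩
    · exact Or.inl ⟨mz M, hq.ax4 _⟩
    · refine Or.inr ⟨b, ?_⟩
      show ma b (std 1) = ms b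
      rw [hq.ma_std]
      rfl
  | succ n ih =>
    intro a
    rcases ih a with h | ⟨c, hc⟩
    · obtain ⟨k, hk, rfl⟩ := hq.mLE_std h
      exact Or.inl (hq.mLE_std_std (Nat.le_succ_of_le hk))
    · rcases hq.ax3 c with rfl | ⟨c', rfl⟩
      · left
        have hc' : ma (mz M) (std (n+1)) = a := hc
        rw [hq.ma_std, ← std_eq_sIter] at hc'
        subst hc'
        exact hq.mLE_std_std (le_refl _)
      · right
        refine ⟨c', ?_⟩
        show ma c' (std (n+2)) = a
        rw [hq.ma_std]
        have hc' : ma (ms c') (std (n+1)) = a := hc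
        rw [hq.ma_std] at hc'
        exact (hq.sIter_ms _ _).symm.trans hc'

lemma tri' (n : ℕ) (a : M) : a = std n ∨ mLT a (std n) ∨ mLT (std n) a := by
  rcases hq.tri n a with h | h
  · obtain ⟨k, hk, rfl⟩ := hq.mLE_std h
    rcases Nat.lt_or_ge k n with h' | h'
    · exact Or.inr (Or.inl (hq.mLT_std_std h'))
    · exact Or.inl (congrArg std (Nat.le_antisymm hk h'))
  · exact Or.inr (Or.inr h)

end QM
end QModels

section AST
open FirstOrder.Language FirstOrder.Language.Structure FirstOrder

/-- terms over `k` numeric variables -/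
abbrev ATm (k : ℕ) := LA.Term (Empty ⊕ Fin k)

/-- variable as a term -/
def vr {k : ℕ} (i : Fin k) : ATm k := Term.var (Sum.inr i)

/-- the empty valuation -/
def vE {M : Type} : Empty → M := fun e => e.elim

/-- value of a term in ℕ -/
def valT {k : ℕ} (w : Fin k → ℕ) (t : ATm k) : ℕ := Term.realize (Sum.elim vE w) t

@[simp] lemma valT_vr {k : ℕ} (w : Fin k → ℕ) (i : Fin k) : valT w (vr i) = w i := rfl
@[simp] lemma valT_zeroT {k : ℕ} (w : Fin k → ℕ) : valT w zeroT = 0 := rfl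
@[simp] lemma valT_succT {k : ℕ} (w : Fin k → ℕ) (t : ATm k) :
    valT w (succT t) = valT w t + 1 := rfl
@[simp] lemma valT_addT {k : ℕ} (w : Fin k → ℕ) (s t : ATm k) :
    valT w (addT s t) = valT w s + valT w t := rfl
@[simp] lemma valT_mulT {k : ℕ} (w : Fin k → ℕ) (s t : ATm k) :
    valT w (mulT s t) = valT w s * valT w t := rfl
@[simp] lemma valT_num {k : ℕ} (w : Fin k → ℕ) (n : ℕ) : valT w (num n) = n := by
  induction n with
  | zero => rfl
  | succ n ih => simp [num, ih]

lemma fin1_eta {α : Type*} (g : Fin 1 → α) : ![g 0] = g := by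
  funext i; fin_cases i; rfl
lemma fin2_eta {α : Type*} (g : Fin 2 → α) : ![g 0, g 1] = g := by
  funext i; fin_cases i <;> rfl

section TermStd
variable {M : Type} [LA.Structure M]

lemma realize_zeroT (v : Empty ⊕ Fin k → M) : Term.realize v (zeroT : ATm k) = mz M := by
  simp only [zeroT, Term.realize, mz]
  exact congrArg _ (Subsingleton.elim _ _)
lemma realize_succT (v : Empty ⊕ Fin k → M) (t : ATm k) :
    Term.realize v (succT t) = ms (Term.realize v t) := by
  simp only [succT, Term.realize, ms]
  exact congrArg _ (fin1_eta _).symm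
lemma realize_addT (v : Empty ⊕ Fin k → M) (s t : ATm k) :
    Term.realize v (addT s t) = ma (Term.realize v s) (Term.realize v t) := by
  simp only [addT, Term.realize, ma]
  refine congrArg _ ?_
  refine (fin2_eta _).symm.trans ?_
  rfl
lemma realize_mulT (v : Empty ⊕ Fin k → M) (s t : ATm k) :
    Term.realize v (mulT s t) = mm (Term.realize v s) (Term.realize v t) := by
  simp only [mulT, Term.realize, mm]
  refine congrArg _ ?_
  refine (fin2_eta _).symm.trans ?_
  rfl

lemma realize_num (v : Empty ⊕ Fin k → M) (n : ℕ) :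
    Term.realize v (num n : ATm k) = std n := by
  induction n with
  | zero => exact realize_zeroT v
  | succ n ih => rw [num, realize_succT, ih]; rfl

lemma QM.term_std (hq : QM M) {k : ℕ} (t : ATm k) (u : Fin k → M) (w : Fin k → ℕ)
    (h : ∀ i, u i = std (w i)) :
    Term.realize (Sum.elim vE u) t = std (valT w t) := by
  induction t with
  | var i =>
    rcases i with e | i
    · exact e.elim
    · exact h i
  | func f ts ih =>
    cases f with
    | zero =>
      rw [show Term.func ArithFunc.zero ts = zeroT from congrArg _ (Subsingleton.elim _ _),
        realize_zeroT]
      rfl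
    | succ =>
      rw [show Term.func ArithFunc.succ ts = succT (ts 0) from congrArg _ (fin1_eta _).symm,
        realize_succT, ih, valT_succT]
      rfl
    | add =>
      rw [show Term.func ArithFunc.add ts = addT (ts 0) (ts 1) from congrArg _ (fin2_eta _).symm,
        realize_addT, ih, ih, valT_addT, hq.std_add]
    | mul =>
      rw [show Term.func ArithFunc.mul ts = mulT (ts 0) (ts 1) from congrArg _ (fin2_eta _).symm,
        realize_mulT, ih, ih, valT_mulT, hq.std_mul]

end TermStd

/-- Δ₀-ish formulas over `k` numeric variables -/
inductive AF : ℕ → Type where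
  | eq {k} (s t : ATm k) : AF k
  | le {k} (s t : ATm k) : AF k
  | nt {k} (φ : AF k) : AF k
  | an {k} (φ ψ : AF k) : AF k
  | bex {k} (t : ATm k) (φ : AF (k+1)) : AF k
  | ball {k} (t : ATm k) (φ : AF (k+1)) : AF k

/-- standard semantics over ℕ -/
def nsem : {k : ℕ} → AF k → (Fin k → ℕ) → Prop
  | _, .eq s t, w => valT w s = valT w t
  | _, .le s t, w => valT w s ≤ valT w t
  | _, .nt φ, w => ¬ nsem φ w
  | _, .an φ ψ, w => nsem φ w ∧ nsem ψ w
  | _, .bex t φ, w => ∃ m, m ≤ valT w t ∧ nsem φ (Fin.snoc w m)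
  | _, .ball t φ, w => ∀ m, m ≤ valT w t → nsem φ (Fin.snoc w m)

@[simp] lemma nsem_eq {k} (s t : ATm k) (w) : nsem (.eq s t) w ↔ valT w s = valT w t := Iff.rfl
@[simp] lemma nsem_le {k} (s t : ATm k) (w) : nsem (.le s t) w ↔ valT w s ≤ valT w t := Iff.rfl
@[simp] lemma nsem_nt {k} (φ : AF k) (w) : nsem (.nt φ) w ↔ ¬ nsem φ w := Iff.rfl
@[simp] lemma nsem_an {k} (φ ψ : AF k) (w) : nsem (.an φ ψ) w ↔ nsem φ w ∧ nsem ψ w := Iff.rfl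
@[simp] lemma nsem_bex {k} (t : ATm k) (φ : AF (k+1)) (w) :
    nsem (.bex t φ) w ↔ ∃ m, m ≤ valT w t ∧ nsem φ (Fin.snoc w m) := Iff.rfl
@[simp] lemma nsem_ball {k} (t : ATm k) (φ : AF (k+1)) (w) :
    nsem (.ball t φ) w ↔ ∀ m, m ≤ valT w t → nsem φ (Fin.snoc w m) := Iff.rfl

/-- relabel a term along a variable renaming -/
def ctm {k n : ℕ} (ρ : Fin k → Fin n) (t : ATm k) : ATm n := t.relabel (Sum.map id ρ)

/-- lift a term to one more variable -/
def lift1 {n : ℕ} (t : ATm n) : ATm (n+1) := ctm Fin.castSucc t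

/-- the formula `s ≤ t` -/
def leB {n : ℕ} (s t : ATm n) : LA.BoundedFormula Empty n :=
  BoundedFormula.ex (BoundedFormula.equal (addT (vr (Fin.last n)) (lift1 s)) (lift1 t))

/-- compile an `AF` into a genuine first-order formula, along a renaming of variables -/
def AF.compile : {k : ℕ} → AF k → {n : ℕ} → (ρ : Fin k → Fin n) → LA.BoundedFormula Empty n
  | _, .eq s t, _, ρ => BoundedFormula.equal (ctm ρ s) (ctm ρ t)
  | _, .le s t, _, ρ => leB (ctm ρ s) (ctm ρ t)
  | _, .nt φ, _, ρ => (φ.compile ρ).not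
  | _, .an φ ψ, _, ρ => (φ.compile ρ) ⊓ (ψ.compile ρ)
  | _, .bex t φ, n, ρ => BoundedFormula.ex ((leB (vr (Fin.last n)) (lift1 (ctm ρ t))) ⊓
      (φ.compile (Fin.snoc (Fin.castSucc ∘ ρ) (Fin.last n))))
  | _, .ball t φ, n, ρ => BoundedFormula.all ((leB (vr (Fin.last n)) (lift1 (ctm ρ t))).imp
      (φ.compile (Fin.snoc (Fin.castSucc ∘ ρ) (Fin.last n))))

section Abs
variable {M : Type} [LA.Structure M]

lemma realize_ctm {k n : ℕ} (ρ : Fin k → Fin n) (t : ATm k) (v : Empty → M) (xs : Fin n → M) :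
    Term.realize (Sum.elim v xs) (ctm ρ t) = Term.realize (Sum.elim v (xs ∘ ρ)) t := by
  rw [ctm, Term.realize_relabel]
  congr 1
  funext i
  rcases i with e | i <;> rfl

@[simp] lemma realize_vr {n : ℕ} (v : Empty → M) (xs : Fin n → M) (i : Fin n) :
    Term.realize (Sum.elim v xs) (vr i) = xs i := rfl

lemma realize_equal' {α : Type} {n : ℕ} (t₁ t₂ : LA.Term (α ⊕ Fin n)) (v : α → M)
    (xs : Fin n → M) :
    (BoundedFormula.equal t₁ t₂).Realize v xs ↔
      Term.realize (Sum.elim v xs) t₁ = Term.realize (Sum.elim v xs) t₂ := Iff.rfl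

lemma realize_leB {n : ℕ} (s t : ATm n) (v : Empty → M) (xs : Fin n → M) :
    (leB s t).Realize v xs ↔
      mLE (Term.realize (Sum.elim v xs) s) (Term.realize (Sum.elim v xs) t) := by
  rw [leB, BoundedFormula.realize_ex]
  refine exists_congr fun a => ?_
  rw [realize_equal', realize_addT]
  have h1 : ∀ u : ATm n, Term.realize (Sum.elim v (Fin.snoc xs a)) (lift1 u)
      = Term.realize (Sum.elim v xs) u := by
    intro u
    rw [lift1, realize_ctm]
    congr 1
    funext i
    rcases i with e | i
    · rfl
    · simp [Fin.snoc_castSucc]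
  rw [h1, h1, realize_vr, Fin.snoc_last]

lemma realize_lift1_snoc {n : ℕ} (u : ATm n) (v : Empty → M) (xs : Fin n → M) (a : M) :
    Term.realize (Sum.elim v (Fin.snoc xs a)) (lift1 u) = Term.realize (Sum.elim v xs) u := by
  rw [lift1, realize_ctm]
  congr 1
  funext i
  rcases i with e | i
  · rfl
  · simp [Fin.snoc_castSucc]

lemma realize_leB_last {n : ℕ} (u : ATm n) (v : Empty → M) (xs : Fin n → M) (a : M) :
    ((leB (vr (Fin.last n)) (lift1 u)).Realize v (Fin.snoc xs a)) ↔
      mLE a (Term.realize (Sum.elim v xs) u) := by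
  rw [realize_leB, realize_lift1_snoc, realize_vr, Fin.snoc_last]

lemma snoc_cond {k n : ℕ} (ρ : Fin k → Fin n) (w : Fin k → ℕ)
    (xs : Fin n → M) (h : ∀ i, xs (ρ i) = std (w i)) (m : ℕ) :
    ∀ i : Fin (k+1), (Fin.snoc xs (std m) : Fin (n+1) → M)
      ((Fin.snoc (Fin.castSucc ∘ ρ) (Fin.last n) : Fin (k+1) → Fin (n+1)) i)
      = std ((Fin.snoc w m : Fin (k+1) → ℕ) i) := by
  intro i
  refine Fin.lastCases ?_ ?_ i
  · simp
  · intro j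
    simp only [Fin.snoc_castSucc, Function.comp_apply]
    exact h j

lemma QM.abs (hq : QM M) : ∀ {k : ℕ} (φ : AF k) {n : ℕ} (ρ : Fin k → Fin n)
    (w : Fin k → ℕ) (xs : Fin n → M), (∀ i, xs (ρ i) = std (w i)) →
    ((φ.compile ρ).Realize vE xs ↔ nsem φ w) := by
  intro k φ
  induction φ with
  | eq s t =>
    intro n ρ w xs h
    rw [AF.compile, realize_equal', realize_ctm, realize_ctm,
      hq.term_std s (xs ∘ ρ) w h, hq.term_std t (xs ∘ ρ) w h]
    exact ⟨fun hh => hq.std_inj _ _ hh, fun hh => congrArg std hh⟩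
  | le s t =>
    intro n ρ w xs h
    rw [AF.compile, realize_leB, realize_ctm, realize_ctm,
      hq.term_std s (xs ∘ ρ) w h, hq.term_std t (xs ∘ ρ) w h]
    constructor
    · intro hh
      obtain ⟨kk, hk, hs⟩ := hq.mLE_std hh
      show valT w s ≤ valT w t
      rw [hq.std_inj _ _ hs]
      exact hk
    · exact fun hh => hq.mLE_std_std hh
  | nt φ ih =>
    intro n ρ w xs h
    rw [AF.compile, BoundedFormula.realize_not, ih ρ w xs h]
    exact Iff.rfl
  | an φ ψ ih1 ih2 =>
    intro n ρ w xs h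
    rw [AF.compile, BoundedFormula.realize_inf, ih1 ρ w xs h, ih2 ρ w xs h]
    exact Iff.rfl
  | bex t φ ih =>
    intro n ρ w xs h
    rw [AF.compile, BoundedFormula.realize_ex, nsem_bex]
    constructor
    · rintro ⟨a, ha⟩
      rw [BoundedFormula.realize_inf, realize_leB_last] at ha
      obtain ⟨ha1, ha2⟩ := ha
      rw [realize_ctm, hq.term_std t (xs ∘ ρ) w h] at ha1
      obtain ⟨m, hm, rfl⟩ := hq.mLE_std ha1
      refine ⟨m, hm, ?_⟩
      rw [← ih (Fin.snoc (Fin.castSucc ∘ ρ) (Fin.last n)) (Fin.snoc w m)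
        (Fin.snoc xs (std m)) (snoc_cond ρ w xs h m)]
      exact ha2
    · rintro ⟨m, hm, hφ⟩
      refine ⟨std m, ?_⟩
      rw [BoundedFormula.realize_inf, realize_leB_last, realize_ctm,
        hq.term_std t (xs ∘ ρ) w h]
      exact ⟨hq.mLE_std_std hm,
        (ih (Fin.snoc (Fin.castSucc ∘ ρ) (Fin.last n)) (Fin.snoc w m)
          (Fin.snoc xs (std m)) (snoc_cond ρ w xs h m)).2 hφ⟩
  | ball t φ ih =>
    intro n ρ w xs h
    rw [AF.compile, BoundedFormula.realize_all, nsem_ball]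
    constructor
    · intro hh m hm
      have := hh (std m)
      rw [BoundedFormula.realize_imp, realize_leB_last, realize_ctm,
        hq.term_std t (xs ∘ ρ) w h] at this
      have h2 := this (hq.mLE_std_std hm)
      rw [← ih (Fin.snoc (Fin.castSucc ∘ ρ) (Fin.last n)) (Fin.snoc w m)
        (Fin.snoc xs (std m)) (snoc_cond ρ w xs h m)]
      exact h2
    · intro hh a
      rw [BoundedFormula.realize_imp, realize_leB_last, realize_ctm,
        hq.term_std t (xs ∘ ρ) w h]
      intro ha
      obtain ⟨m, hm, rfl⟩ := hq.mLE_std ha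
      rw [ih (Fin.snoc (Fin.castSucc ∘ ρ) (Fin.last n)) (Fin.snoc w m)
        (Fin.snoc xs (std m)) (snoc_cond ρ w xs h m)]
      exact hh m hm

end Abs
end AST

section Beta

/-- Gödel's beta function -/
def beta (d₁ d₂ i : ℕ) : ℕ := d₁ % ((i+1) * d₂ + 1)

lemma crt_list (r m : ℕ → ℕ) :
    ∀ n : ℕ, (∀ i j, i < j → j < n → Nat.Coprime (m i) (m j)) →
    ∃ x, ∀ i < n, x % m i = r i % m i := by
  intro n
  induction n with
  | zero => exact fun _ => ⟨0, fun i hi => absurd hi (Nat.not_lt_zero i)⟩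
  | succ n ih =>
    intro hco
    obtain ⟨x, hx⟩ := ih (fun i j hij hj => hco i j hij (Nat.lt_succ_of_lt hj))
    have hcop : Nat.Coprime (∏ i ∈ Finset.range n, m i) (m n) := by
      rw [Nat.coprime_prod_left_iff]
      intro i hi
      exact hco i n (Finset.mem_range.1 hi) (Nat.lt_succ_self n)
    obtain ⟨y, hy1, hy2⟩ := Nat.chineseRemainder hcop x (r n)
    refine ⟨y, ?_⟩
    intro i hi
    rcases Nat.lt_succ_iff_lt_or_eq.1 hi with hi' | rfl
    · have hdvd : m i ∣ ∏ j ∈ Finset.range n, m j :=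
        Finset.dvd_prod_of_mem m (Finset.mem_range.2 hi')
      have : y ≡ x [MOD m i] := Nat.ModEq.of_dvd hdvd hy1
      rw [Nat.ModEq] at this
      rw [this]
      exact hx i hi'
    · exact hy2

lemma list_le_foldr_max (l : List ℕ) : ∀ x ∈ l, x ≤ l.foldr max 0 := by
  induction l with
  | nil => intro x hx; cases hx
  | cons a l ih =>
    intro x hx
    rcases List.mem_cons.1 hx with rfl | hx
    · exact le_max_left _ _
    · exact le_trans (ih x hx) (le_max_right _ _)

lemma beta_lemma (l : List ℕ) : ∃ d₁ d₂, ∀ (i : ℕ) (h : i < l.length),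
    beta d₁ d₂ i = l.get ⟨i, h⟩ := by
  classical
  set n := l.length with hn
  set B := max n (l.foldr max 0) + 1 with hB
  set d₂ := B.factorial with hd2
  have hBpos : 1 ≤ B := Nat.succ_le_succ (Nat.zero_le _)
  have hd2B : B ≤ d₂ := Nat.self_le_factorial B
  set m : ℕ → ℕ := fun i => (i+1) * d₂ + 1 with hm
  have hco : ∀ i j, i < j → j < n → Nat.Coprime (m i) (m j) := by
    intro i j hij hj
    rw [Nat.coprime_comm]
    by_contra hnc
    obtain ⟨p, hp, hpd⟩ := Nat.exists_prime_and_dvd hnc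
    have hpi : p ∣ m j := hpd.trans (Nat.gcd_dvd_left _ _)
    have hpj : p ∣ m i := hpd.trans (Nat.gcd_dvd_right _ _)
    have hpd2 : ¬ p ∣ d₂ := by
      intro hdvd
      have : p ∣ (i+1) * d₂ := Dvd.dvd.mul_left hdvd _
      have h1 : p ∣ 1 := (Nat.dvd_add_right this).mp hpj
      exact hp.one_lt.ne' (Nat.dvd_one.1 h1)
    have hdiff : p ∣ (j - i) * d₂ := by
      have h1 : m j - m i = (j - i) * d₂ := by
        have : (j+1) * d₂ - (i+1) * d₂ = (j - i) * d₂ := by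
          rw [← Nat.sub_mul]
          congr 1
          omega
        simp only [hm]
        omega
      have := Nat.dvd_sub hpi hpj
      rwa [h1] at this
    have hpji : p ∣ j - i := by
      rcases (Nat.Prime.dvd_mul hp).1 hdiff with h | h
      · exact h
      · exact absurd h hpd2
    have hjile : j - i ≤ B := by omega
    have hjipos : 0 < j - i := by omega
    have : p ∣ d₂ := by
      rw [hd2]
      exact Nat.dvd_factorial hp.pos (le_trans (Nat.le_of_dvd hjipos hpji) hjile)
    exact hpd2 this
  obtain ⟨x, hx⟩ := crt_list (fun i => l.getD i 0) m n hco
  refine ⟨x, d₂, ?_⟩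
  intro i hi
  have h1 : x % m i = l.getD i 0 % m i := hx i hi
  have h2 : l.getD i 0 = l.get ⟨i, hi⟩ := List.getD_eq_get l 0 ⟨i, hi⟩
  have h3 : l.get ⟨i, hi⟩ < m i := by
    have hmem : l.get ⟨i, hi⟩ ∈ l := List.get_mem l ⟨i, hi⟩
    have := list_le_foldr_max l _ hmem
    have hlt : l.get ⟨i, hi⟩ < B := by omega
    have : B ≤ m i := le_trans hd2B (by
      simp only [hm]
      calc d₂ ≤ (i+1) * d₂ := Nat.le_mul_of_pos_left _ (Nat.succ_pos i)
        _ ≤ (i+1) * d₂ + 1 := Nat.le_succ _)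
    omega
  rw [beta]
  show x % m i = _
  rw [h1, h2, Nat.mod_eq_of_lt h3]

end Beta

section Arith
open FirstOrder.Language FirstOrder

/-- disjunction -/
def AF.or {k} (φ ψ : AF k) : AF k := ((φ.nt).an (ψ.nt)).nt
/-- implication -/
def AF.impl {k} (φ ψ : AF k) : AF k := (φ.an (ψ.nt)).nt
/-- strict inequality -/
def AF.lt {k} (s t : ATm k) : AF k := AF.le (succT s) t

@[simp] lemma nsem_or {k} (φ ψ : AF k) (w) : nsem (φ.or ψ) w ↔ nsem φ w ∨ nsem ψ w := by
  simp [AF.or, or_iff_not_imp_left]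
@[simp] lemma nsem_impl {k} (φ ψ : AF k) (w) : nsem (φ.impl ψ) w ↔ (nsem φ w → nsem ψ w) := by
  simp [AF.impl]
@[simp] lemma nsem_lt {k} (s t : ATm k) (w) : nsem (AF.lt s t) w ↔ valT w s < valT w t := by
  exact Nat.lt_iff_add_one_le.symm

lemma valT_lift1 {k : ℕ} (w : Fin k → ℕ) (m : ℕ) (t : ATm k) :
    valT (Fin.snoc w m) (lift1 t) = valT w t := realize_lift1_snoc t vE w m

@[simp] lemma valT_snoc_last {k : ℕ} (w : Fin k → ℕ) (m : ℕ) :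
    valT (Fin.snoc w m) (vr (Fin.last k)) = m := by
  show (Fin.snoc w m : Fin (k+1) → ℕ) (Fin.last k) = m
  exact Fin.snoc_last _ _

/-- `c = pair a b` as a formula -/
def pairF {k} (a b c : ATm k) : AF k :=
  ((AF.lt a b).an (AF.eq c (addT (mulT b b) a))).or
    (((AF.lt a b).nt).an (AF.eq c (addT (addT (mulT a a) a) b)))

@[simp] lemma nsem_pairF {k} (a b c : ATm k) (w) :
    nsem (pairF a b c) w ↔ valT w c = Nat.pair (valT w a) (valT w b) := by
  simp only [pairF, nsem_or, nsem_an, nsem_nt, nsem_lt, nsem_eq, valT_addT, valT_mulT]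
  rw [Nat.pair]
  by_cases h : valT w a < valT w b
  · simp [h]
  · simp [h]

/-- `r = beta d₁ d₂ i` as a formula -/
def betaF {k} (d₁ d₂ i r : ATm k) : AF k :=
  (AF.lt r (succT (mulT (succT i) d₂))).an
    (AF.bex d₁ (AF.eq (lift1 d₁)
      (addT (mulT (lift1 (succT (mulT (succT i) d₂))) (vr (Fin.last k))) (lift1 r))))

@[simp] lemma nsem_betaF {k} (d₁ d₂ i r : ATm k) (w) :
    nsem (betaF d₁ d₂ i r) w ↔ valT w r = beta (valT w d₁) (valT w d₂) (valT w i) := by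
  simp only [betaF, nsem_an, nsem_lt, nsem_bex, nsem_eq, valT_succT, valT_mulT,
    valT_lift1, valT_snoc_last, valT_addT]
  set D := valT w d₁
  set E := valT w d₂
  set I := valT w i
  set R := valT w r
  have hm : 0 < (I+1) * E + 1 := Nat.succ_pos _
  constructor
  · rintro ⟨h1, q, _, h2⟩
    rw [beta, h2]
    have : (((I+1)*E+1) * q + R) % ((I+1)*E+1) = R := by
      rw [Nat.add_comm, Nat.add_mul_mod_self_left]
      exact Nat.mod_eq_of_lt (by omega)
    rw [this]
  · intro h
    refine ⟨?_, D / ((I+1)*E+1), Nat.div_le_self _ _, ?_⟩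
    · rw [beta] at h
      have := Nat.mod_lt D hm
      omega
    · rw [h, beta]
      exact (Nat.div_add_mod D ((I+1)*E+1)).symm
end Arith

section SnocEval

@[simp] lemma snocE_0_0 {α : Type*} (w : Fin 0 → α) (a : α) : (Fin.snoc w a : Fin 1 → α) 0 = a := rfl
@[simp] lemma snocE_1_0 {α : Type*} (w : Fin 1 → α) (a : α) : (Fin.snoc w a : Fin 2 → α) 0 = w 0 := rfl
@[simp] lemma snocE_1_1 {α : Type*} (w : Fin 1 → α) (a : α) : (Fin.snoc w a : Fin 2 → α) 1 = a := rfl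
@[simp] lemma snocE_2_0 {α : Type*} (w : Fin 2 → α) (a : α) : (Fin.snoc w a : Fin 3 → α) 0 = w 0 := rfl
@[simp] lemma snocE_2_1 {α : Type*} (w : Fin 2 → α) (a : α) : (Fin.snoc w a : Fin 3 → α) 1 = w 1 := rfl
@[simp] lemma snocE_2_2 {α : Type*} (w : Fin 2 → α) (a : α) : (Fin.snoc w a : Fin 3 → α) 2 = a := rfl
@[simp] lemma snocE_3_0 {α : Type*} (w : Fin 3 → α) (a : α) : (Fin.snoc w a : Fin 4 → α) 0 = w 0 := rfl
@[simp] lemma snocE_3_1 {α : Type*} (w : Fin 3 → α) (a : α) : (Fin.snoc w a : Fin 4 → α) 1 = w 1 := rfl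
@[simp] lemma snocE_3_2 {α : Type*} (w : Fin 3 → α) (a : α) : (Fin.snoc w a : Fin 4 → α) 2 = w 2 := rfl
@[simp] lemma snocE_3_3 {α : Type*} (w : Fin 3 → α) (a : α) : (Fin.snoc w a : Fin 4 → α) 3 = a := rfl
@[simp] lemma snocE_4_0 {α : Type*} (w : Fin 4 → α) (a : α) : (Fin.snoc w a : Fin 5 → α) 0 = w 0 := rfl
@[simp] lemma snocE_4_1 {α : Type*} (w : Fin 4 → α) (a : α) : (Fin.snoc w a : Fin 5 → α) 1 = w 1 := rfl
@[simp] lemma snocE_4_2 {α : Type*} (w : Fin 4 → α) (a : α) : (Fin.snoc w a : Fin 5 → α) 2 = w 2 := rfl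
@[simp] lemma snocE_4_3 {α : Type*} (w : Fin 4 → α) (a : α) : (Fin.snoc w a : Fin 5 → α) 3 = w 3 := rfl
@[simp] lemma snocE_4_4 {α : Type*} (w : Fin 4 → α) (a : α) : (Fin.snoc w a : Fin 5 → α) 4 = a := rfl
@[simp] lemma snocE_5_0 {α : Type*} (w : Fin 5 → α) (a : α) : (Fin.snoc w a : Fin 6 → α) 0 = w 0 := rfl
@[simp] lemma snocE_5_1 {α : Type*} (w : Fin 5 → α) (a : α) : (Fin.snoc w a : Fin 6 → α) 1 = w 1 := rfl
@[simp] lemma snocE_5_2 {α : Type*} (w : Fin 5 → α) (a : α) : (Fin.snoc w a : Fin 6 → α) 2 = w 2 := rfl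
@[simp] lemma snocE_5_3 {α : Type*} (w : Fin 5 → α) (a : α) : (Fin.snoc w a : Fin 6 → α) 3 = w 3 := rfl
@[simp] lemma snocE_5_4 {α : Type*} (w : Fin 5 → α) (a : α) : (Fin.snoc w a : Fin 6 → α) 4 = w 4 := rfl
@[simp] lemma snocE_5_5 {α : Type*} (w : Fin 5 → α) (a : α) : (Fin.snoc w a : Fin 6 → α) 5 = a := rfl
@[simp] lemma snocE_6_0 {α : Type*} (w : Fin 6 → α) (a : α) : (Fin.snoc w a : Fin 7 → α) 0 = w 0 := rfl
@[simp] lemma snocE_6_1 {α : Type*} (w : Fin 6 → α) (a : α) : (Fin.snoc w a : Fin 7 → α) 1 = w 1 := rfl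
@[simp] lemma snocE_6_2 {α : Type*} (w : Fin 6 → α) (a : α) : (Fin.snoc w a : Fin 7 → α) 2 = w 2 := rfl
@[simp] lemma snocE_6_3 {α : Type*} (w : Fin 6 → α) (a : α) : (Fin.snoc w a : Fin 7 → α) 3 = w 3 := rfl
@[simp] lemma snocE_6_4 {α : Type*} (w : Fin 6 → α) (a : α) : (Fin.snoc w a : Fin 7 → α) 4 = w 4 := rfl
@[simp] lemma snocE_6_5 {α : Type*} (w : Fin 6 → α) (a : α) : (Fin.snoc w a : Fin 7 → α) 5 = w 5 := rfl
@[simp] lemma snocE_6_6 {α : Type*} (w : Fin 6 → α) (a : α) : (Fin.snoc w a : Fin 7 → α) 6 = a := rfl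
@[simp] lemma snocE_7_0 {α : Type*} (w : Fin 7 → α) (a : α) : (Fin.snoc w a : Fin 8 → α) 0 = w 0 := rfl
@[simp] lemma snocE_7_1 {α : Type*} (w : Fin 7 → α) (a : α) : (Fin.snoc w a : Fin 8 → α) 1 = w 1 := rfl
@[simp] lemma snocE_7_2 {α : Type*} (w : Fin 7 → α) (a : α) : (Fin.snoc w a : Fin 8 → α) 2 = w 2 := rfl
@[simp] lemma snocE_7_3 {α : Type*} (w : Fin 7 → α) (a : α) : (Fin.snoc w a : Fin 8 → α) 3 = w 3 := rfl
@[simp] lemma snocE_7_4 {α : Type*} (w : Fin 7 → α) (a : α) : (Fin.snoc w a : Fin 8 → α) 4 = w 4 := rfl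
@[simp] lemma snocE_7_5 {α : Type*} (w : Fin 7 → α) (a : α) : (Fin.snoc w a : Fin 8 → α) 5 = w 5 := rfl
@[simp] lemma snocE_7_6 {α : Type*} (w : Fin 7 → α) (a : α) : (Fin.snoc w a : Fin 8 → α) 6 = w 6 := rfl
@[simp] lemma snocE_7_7 {α : Type*} (w : Fin 7 → α) (a : α) : (Fin.snoc w a : Fin 8 → α) 7 = a := rfl
@[simp] lemma snocE_8_0 {α : Type*} (w : Fin 8 → α) (a : α) : (Fin.snoc w a : Fin 9 → α) 0 = w 0 := rfl
@[simp] lemma snocE_8_1 {α : Type*} (w : Fin 8 → α) (a : α) : (Fin.snoc w a : Fin 9 → α) 1 = w 1 := rfl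
@[simp] lemma snocE_8_2 {α : Type*} (w : Fin 8 → α) (a : α) : (Fin.snoc w a : Fin 9 → α) 2 = w 2 := rfl
@[simp] lemma snocE_8_3 {α : Type*} (w : Fin 8 → α) (a : α) : (Fin.snoc w a : Fin 9 → α) 3 = w 3 := rfl
@[simp] lemma snocE_8_4 {α : Type*} (w : Fin 8 → α) (a : α) : (Fin.snoc w a : Fin 9 → α) 4 = w 4 := rfl
@[simp] lemma snocE_8_5 {α : Type*} (w : Fin 8 → α) (a : α) : (Fin.snoc w a : Fin 9 → α) 5 = w 5 := rfl
@[simp] lemma snocE_8_6 {α : Type*} (w : Fin 8 → α) (a : α) : (Fin.snoc w a : Fin 9 → α) 6 = w 6 := rfl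
@[simp] lemma snocE_8_7 {α : Type*} (w : Fin 8 → α) (a : α) : (Fin.snoc w a : Fin 9 → α) 7 = w 7 := rfl
@[simp] lemma snocE_8_8 {α : Type*} (w : Fin 8 → α) (a : α) : (Fin.snoc w a : Fin 9 → α) 8 = a := rfl
@[simp] lemma snocE_9_0 {α : Type*} (w : Fin 9 → α) (a : α) : (Fin.snoc w a : Fin 10 → α) 0 = w 0 := rfl
@[simp] lemma snocE_9_1 {α : Type*} (w : Fin 9 → α) (a : α) : (Fin.snoc w a : Fin 10 → α) 1 = w 1 := rfl
@[simp] lemma snocE_9_2 {α : Type*} (w : Fin 9 → α) (a : α) : (Fin.snoc w a : Fin 10 → α) 2 = w 2 := rfl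
@[simp] lemma snocE_9_3 {α : Type*} (w : Fin 9 → α) (a : α) : (Fin.snoc w a : Fin 10 → α) 3 = w 3 := rfl
@[simp] lemma snocE_9_4 {α : Type*} (w : Fin 9 → α) (a : α) : (Fin.snoc w a : Fin 10 → α) 4 = w 4 := rfl
@[simp] lemma snocE_9_5 {α : Type*} (w : Fin 9 → α) (a : α) : (Fin.snoc w a : Fin 10 → α) 5 = w 5 := rfl
@[simp] lemma snocE_9_6 {α : Type*} (w : Fin 9 → α) (a : α) : (Fin.snoc w a : Fin 10 → α) 6 = w 6 := rfl
@[simp] lemma snocE_9_7 {α : Type*} (w : Fin 9 → α) (a : α) : (Fin.snoc w a : Fin 10 → α) 7 = w 7 := rfl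
@[simp] lemma snocE_9_8 {α : Type*} (w : Fin 9 → α) (a : α) : (Fin.snoc w a : Fin 10 → α) 8 = w 8 := rfl
@[simp] lemma snocE_9_9 {α : Type*} (w : Fin 9 → α) (a : α) : (Fin.snoc w a : Fin 10 → α) 9 = a := rfl
@[simp] lemma snocE_10_0 {α : Type*} (w : Fin 10 → α) (a : α) : (Fin.snoc w a : Fin 11 → α) 0 = w 0 := rfl
@[simp] lemma snocE_10_1 {α : Type*} (w : Fin 10 → α) (a : α) : (Fin.snoc w a : Fin 11 → α) 1 = w 1 := rfl
@[simp] lemma snocE_10_2 {α : Type*} (w : Fin 10 → α) (a : α) : (Fin.snoc w a : Fin 11 → α) 2 = w 2 := rfl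
@[simp] lemma snocE_10_3 {α : Type*} (w : Fin 10 → α) (a : α) : (Fin.snoc w a : Fin 11 → α) 3 = w 3 := rfl
@[simp] lemma snocE_10_4 {α : Type*} (w : Fin 10 → α) (a : α) : (Fin.snoc w a : Fin 11 → α) 4 = w 4 := rfl
@[simp] lemma snocE_10_5 {α : Type*} (w : Fin 10 → α) (a : α) : (Fin.snoc w a : Fin 11 → α) 5 = w 5 := rfl
@[simp] lemma snocE_10_6 {α : Type*} (w : Fin 10 → α) (a : α) : (Fin.snoc w a : Fin 11 → α) 6 = w 6 := rfl
@[simp] lemma snocE_10_7 {α : Type*} (w : Fin 10 → α) (a : α) : (Fin.snoc w a : Fin 11 → α) 7 = w 7 := rfl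
@[simp] lemma snocE_10_8 {α : Type*} (w : Fin 10 → α) (a : α) : (Fin.snoc w a : Fin 11 → α) 8 = w 8 := rfl
@[simp] lemma snocE_10_9 {α : Type*} (w : Fin 10 → α) (a : α) : (Fin.snoc w a : Fin 11 → α) 9 = w 9 := rfl
@[simp] lemma snocE_10_10 {α : Type*} (w : Fin 10 → α) (a : α) : (Fin.snoc w a : Fin 11 → α) 10 = a := rfl
@[simp] lemma snocE_11_0 {α : Type*} (w : Fin 11 → α) (a : α) : (Fin.snoc w a : Fin 12 → α) 0 = w 0 := rfl
@[simp] lemma snocE_11_1 {α : Type*} (w : Fin 11 → α) (a : α) : (Fin.snoc w a : Fin 12 → α) 1 = w 1 := rfl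
@[simp] lemma snocE_11_2 {α : Type*} (w : Fin 11 → α) (a : α) : (Fin.snoc w a : Fin 12 → α) 2 = w 2 := rfl
@[simp] lemma snocE_11_3 {α : Type*} (w : Fin 11 → α) (a : α) : (Fin.snoc w a : Fin 12 → α) 3 = w 3 := rfl
@[simp] lemma snocE_11_4 {α : Type*} (w : Fin 11 → α) (a : α) : (Fin.snoc w a : Fin 12 → α) 4 = w 4 := rfl
@[simp] lemma snocE_11_5 {α : Type*} (w : Fin 11 → α) (a : α) : (Fin.snoc w a : Fin 12 → α) 5 = w 5 := rfl
@[simp] lemma snocE_11_6 {α : Type*} (w : Fin 11 → α) (a : α) : (Fin.snoc w a : Fin 12 → α) 6 = w 6 := rfl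
@[simp] lemma snocE_11_7 {α : Type*} (w : Fin 11 → α) (a : α) : (Fin.snoc w a : Fin 12 → α) 7 = w 7 := rfl
@[simp] lemma snocE_11_8 {α : Type*} (w : Fin 11 → α) (a : α) : (Fin.snoc w a : Fin 12 → α) 8 = w 8 := rfl
@[simp] lemma snocE_11_9 {α : Type*} (w : Fin 11 → α) (a : α) : (Fin.snoc w a : Fin 12 → α) 9 = w 9 := rfl
@[simp] lemma snocE_11_10 {α : Type*} (w : Fin 11 → α) (a : α) : (Fin.snoc w a : Fin 12 → α) 10 = w 10 := rfl
@[simp] lemma snocE_11_11 {α : Type*} (w : Fin 11 → α) (a : α) : (Fin.snoc w a : Fin 12 → α) 11 = a := rfl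
@[simp] lemma snocE_12_0 {α : Type*} (w : Fin 12 → α) (a : α) : (Fin.snoc w a : Fin 13 → α) 0 = w 0 := rfl
@[simp] lemma snocE_12_1 {α : Type*} (w : Fin 12 → α) (a : α) : (Fin.snoc w a : Fin 13 → α) 1 = w 1 := rfl
@[simp] lemma snocE_12_2 {α : Type*} (w : Fin 12 → α) (a : α) : (Fin.snoc w a : Fin 13 → α) 2 = w 2 := rfl
@[simp] lemma snocE_12_3 {α : Type*} (w : Fin 12 → α) (a : α) : (Fin.snoc w a : Fin 13 → α) 3 = w 3 := rfl
@[simp] lemma snocE_12_4 {α : Type*} (w : Fin 12 → α) (a : α) : (Fin.snoc w a : Fin 13 → α) 4 = w 4 := rfl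
@[simp] lemma snocE_12_5 {α : Type*} (w : Fin 12 → α) (a : α) : (Fin.snoc w a : Fin 13 → α) 5 = w 5 := rfl
@[simp] lemma snocE_12_6 {α : Type*} (w : Fin 12 → α) (a : α) : (Fin.snoc w a : Fin 13 → α) 6 = w 6 := rfl
@[simp] lemma snocE_12_7 {α : Type*} (w : Fin 12 → α) (a : α) : (Fin.snoc w a : Fin 13 → α) 7 = w 7 := rfl
@[simp] lemma snocE_12_8 {α : Type*} (w : Fin 12 → α) (a : α) : (Fin.snoc w a : Fin 13 → α) 8 = w 8 := rfl
@[simp] lemma snocE_12_9 {α : Type*} (w : Fin 12 → α) (a : α) : (Fin.snoc w a : Fin 13 → α) 9 = w 9 := rfl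
@[simp] lemma snocE_12_10 {α : Type*} (w : Fin 12 → α) (a : α) : (Fin.snoc w a : Fin 13 → α) 10 = w 10 := rfl
@[simp] lemma snocE_12_11 {α : Type*} (w : Fin 12 → α) (a : α) : (Fin.snoc w a : Fin 13 → α) 11 = w 11 := rfl
@[simp] lemma snocE_12_12 {α : Type*} (w : Fin 12 → α) (a : α) : (Fin.snoc w a : Fin 13 → α) 12 = a := rfl
@[simp] lemma snocE_13_0 {α : Type*} (w : Fin 13 → α) (a : α) : (Fin.snoc w a : Fin 14 → α) 0 = w 0 := rfl
@[simp] lemma snocE_13_1 {α : Type*} (w : Fin 13 → α) (a : α) : (Fin.snoc w a : Fin 14 → α) 1 = w 1 := rfl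
@[simp] lemma snocE_13_2 {α : Type*} (w : Fin 13 → α) (a : α) : (Fin.snoc w a : Fin 14 → α) 2 = w 2 := rfl
@[simp] lemma snocE_13_3 {α : Type*} (w : Fin 13 → α) (a : α) : (Fin.snoc w a : Fin 14 → α) 3 = w 3 := rfl
@[simp] lemma snocE_13_4 {α : Type*} (w : Fin 13 → α) (a : α) : (Fin.snoc w a : Fin 14 → α) 4 = w 4 := rfl
@[simp] lemma snocE_13_5 {α : Type*} (w : Fin 13 → α) (a : α) : (Fin.snoc w a : Fin 14 → α) 5 = w 5 := rfl
@[simp] lemma snocE_13_6 {α : Type*} (w : Fin 13 → α) (a : α) : (Fin.snoc w a : Fin 14 → α) 6 = w 6 := rfl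
@[simp] lemma snocE_13_7 {α : Type*} (w : Fin 13 → α) (a : α) : (Fin.snoc w a : Fin 14 → α) 7 = w 7 := rfl
@[simp] lemma snocE_13_8 {α : Type*} (w : Fin 13 → α) (a : α) : (Fin.snoc w a : Fin 14 → α) 8 = w 8 := rfl
@[simp] lemma snocE_13_9 {α : Type*} (w : Fin 13 → α) (a : α) : (Fin.snoc w a : Fin 14 → α) 9 = w 9 := rfl
@[simp] lemma snocE_13_10 {α : Type*} (w : Fin 13 → α) (a : α) : (Fin.snoc w a : Fin 14 → α) 10 = w 10 := rfl
@[simp] lemma snocE_13_11 {α : Type*} (w : Fin 13 → α) (a : α) : (Fin.snoc w a : Fin 14 → α) 11 = w 11 := rfl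
@[simp] lemma snocE_13_12 {α : Type*} (w : Fin 13 → α) (a : α) : (Fin.snoc w a : Fin 14 → α) 12 = w 12 := rfl
@[simp] lemma snocE_13_13 {α : Type*} (w : Fin 13 → α) (a : α) : (Fin.snoc w a : Fin 14 → α) 13 = a := rfl
@[simp] lemma snocE_14_0 {α : Type*} (w : Fin 14 → α) (a : α) : (Fin.snoc w a : Fin 15 → α) 0 = w 0 := rfl
@[simp] lemma snocE_14_1 {α : Type*} (w : Fin 14 → α) (a : α) : (Fin.snoc w a : Fin 15 → α) 1 = w 1 := rfl
@[simp] lemma snocE_14_2 {α : Type*} (w : Fin 14 → α) (a : α) : (Fin.snoc w a : Fin 15 → α) 2 = w 2 := rfl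
@[simp] lemma snocE_14_3 {α : Type*} (w : Fin 14 → α) (a : α) : (Fin.snoc w a : Fin 15 → α) 3 = w 3 := rfl
@[simp] lemma snocE_14_4 {α : Type*} (w : Fin 14 → α) (a : α) : (Fin.snoc w a : Fin 15 → α) 4 = w 4 := rfl
@[simp] lemma snocE_14_5 {α : Type*} (w : Fin 14 → α) (a : α) : (Fin.snoc w a : Fin 15 → α) 5 = w 5 := rfl
@[simp] lemma snocE_14_6 {α : Type*} (w : Fin 14 → α) (a : α) : (Fin.snoc w a : Fin 15 → α) 6 = w 6 := rfl
@[simp] lemma snocE_14_7 {α : Type*} (w : Fin 14 → α) (a : α) : (Fin.snoc w a : Fin 15 → α) 7 = w 7 := rfl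
@[simp] lemma snocE_14_8 {α : Type*} (w : Fin 14 → α) (a : α) : (Fin.snoc w a : Fin 15 → α) 8 = w 8 := rfl
@[simp] lemma snocE_14_9 {α : Type*} (w : Fin 14 → α) (a : α) : (Fin.snoc w a : Fin 15 → α) 9 = w 9 := rfl
@[simp] lemma snocE_14_10 {α : Type*} (w : Fin 14 → α) (a : α) : (Fin.snoc w a : Fin 15 → α) 10 = w 10 := rfl
@[simp] lemma snocE_14_11 {α : Type*} (w : Fin 14 → α) (a : α) : (Fin.snoc w a : Fin 15 → α) 11 = w 11 := rfl
@[simp] lemma snocE_14_12 {α : Type*} (w : Fin 14 → α) (a : α) : (Fin.snoc w a : Fin 15 → α) 12 = w 12 := rfl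
@[simp] lemma snocE_14_13 {α : Type*} (w : Fin 14 → α) (a : α) : (Fin.snoc w a : Fin 15 → α) 13 = w 13 := rfl
@[simp] lemma snocE_14_14 {α : Type*} (w : Fin 14 → α) (a : α) : (Fin.snoc w a : Fin 15 → α) 14 = a := rfl
@[simp] lemma snocE_15_0 {α : Type*} (w : Fin 15 → α) (a : α) : (Fin.snoc w a : Fin 16 → α) 0 = w 0 := rfl
@[simp] lemma snocE_15_1 {α : Type*} (w : Fin 15 → α) (a : α) : (Fin.snoc w a : Fin 16 → α) 1 = w 1 := rfl
@[simp] lemma snocE_15_2 {α : Type*} (w : Fin 15 → α) (a : α) : (Fin.snoc w a : Fin 16 → α) 2 = w 2 := rfl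
@[simp] lemma snocE_15_3 {α : Type*} (w : Fin 15 → α) (a : α) : (Fin.snoc w a : Fin 16 → α) 3 = w 3 := rfl
@[simp] lemma snocE_15_4 {α : Type*} (w : Fin 15 → α) (a : α) : (Fin.snoc w a : Fin 16 → α) 4 = w 4 := rfl
@[simp] lemma snocE_15_5 {α : Type*} (w : Fin 15 → α) (a : α) : (Fin.snoc w a : Fin 16 → α) 5 = w 5 := rfl
@[simp] lemma snocE_15_6 {α : Type*} (w : Fin 15 → α) (a : α) : (Fin.snoc w a : Fin 16 → α) 6 = w 6 := rfl
@[simp] lemma snocE_15_7 {α : Type*} (w : Fin 15 → α) (a : α) : (Fin.snoc w a : Fin 16 → α) 7 = w 7 := rfl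
@[simp] lemma snocE_15_8 {α : Type*} (w : Fin 15 → α) (a : α) : (Fin.snoc w a : Fin 16 → α) 8 = w 8 := rfl
@[simp] lemma snocE_15_9 {α : Type*} (w : Fin 15 → α) (a : α) : (Fin.snoc w a : Fin 16 → α) 9 = w 9 := rfl
@[simp] lemma snocE_15_10 {α : Type*} (w : Fin 15 → α) (a : α) : (Fin.snoc w a : Fin 16 → α) 10 = w 10 := rfl
@[simp] lemma snocE_15_11 {α : Type*} (w : Fin 15 → α) (a : α) : (Fin.snoc w a : Fin 16 → α) 11 = w 11 := rfl
@[simp] lemma snocE_15_12 {α : Type*} (w : Fin 15 → α) (a : α) : (Fin.snoc w a : Fin 16 → α) 12 = w 12 := rfl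
@[simp] lemma snocE_15_13 {α : Type*} (w : Fin 15 → α) (a : α) : (Fin.snoc w a : Fin 16 → α) 13 = w 13 := rfl
@[simp] lemma snocE_15_14 {α : Type*} (w : Fin 15 → α) (a : α) : (Fin.snoc w a : Fin 16 → α) 14 = w 14 := rfl
@[simp] lemma snocE_15_15 {α : Type*} (w : Fin 15 → α) (a : α) : (Fin.snoc w a : Fin 16 → α) 15 = a := rfl
@[simp] lemma snocE_16_0 {α : Type*} (w : Fin 16 → α) (a : α) : (Fin.snoc w a : Fin 17 → α) 0 = w 0 := rfl
@[simp] lemma snocE_16_1 {α : Type*} (w : Fin 16 → α) (a : α) : (Fin.snoc w a : Fin 17 → α) 1 = w 1 := rfl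
@[simp] lemma snocE_16_2 {α : Type*} (w : Fin 16 → α) (a : α) : (Fin.snoc w a : Fin 17 → α) 2 = w 2 := rfl
@[simp] lemma snocE_16_3 {α : Type*} (w : Fin 16 → α) (a : α) : (Fin.snoc w a : Fin 17 → α) 3 = w 3 := rfl
@[simp] lemma snocE_16_4 {α : Type*} (w : Fin 16 → α) (a : α) : (Fin.snoc w a : Fin 17 → α) 4 = w 4 := rfl
@[simp] lemma snocE_16_5 {α : Type*} (w : Fin 16 → α) (a : α) : (Fin.snoc w a : Fin 17 → α) 5 = w 5 := rfl
@[simp] lemma snocE_16_6 {α : Type*} (w : Fin 16 → α) (a : α) : (Fin.snoc w a : Fin 17 → α) 6 = w 6 := rfl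
@[simp] lemma snocE_16_7 {α : Type*} (w : Fin 16 → α) (a : α) : (Fin.snoc w a : Fin 17 → α) 7 = w 7 := rfl
@[simp] lemma snocE_16_8 {α : Type*} (w : Fin 16 → α) (a : α) : (Fin.snoc w a : Fin 17 → α) 8 = w 8 := rfl
@[simp] lemma snocE_16_9 {α : Type*} (w : Fin 16 → α) (a : α) : (Fin.snoc w a : Fin 17 → α) 9 = w 9 := rfl
@[simp] lemma snocE_16_10 {α : Type*} (w : Fin 16 → α) (a : α) : (Fin.snoc w a : Fin 17 → α) 10 = w 10 := rfl
@[simp] lemma snocE_16_11 {α : Type*} (w : Fin 16 → α) (a : α) : (Fin.snoc w a : Fin 17 → α) 11 = w 11 := rfl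
@[simp] lemma snocE_16_12 {α : Type*} (w : Fin 16 → α) (a : α) : (Fin.snoc w a : Fin 17 → α) 12 = w 12 := rfl
@[simp] lemma snocE_16_13 {α : Type*} (w : Fin 16 → α) (a : α) : (Fin.snoc w a : Fin 17 → α) 13 = w 13 := rfl
@[simp] lemma snocE_16_14 {α : Type*} (w : Fin 16 → α) (a : α) : (Fin.snoc w a : Fin 17 → α) 14 = w 14 := rfl
@[simp] lemma snocE_16_15 {α : Type*} (w : Fin 16 → α) (a : α) : (Fin.snoc w a : Fin 17 → α) 15 = w 15 := rfl
@[simp] lemma snocE_16_16 {α : Type*} (w : Fin 16 → α) (a : α) : (Fin.snoc w a : Fin 17 → α) 16 = a := rfl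
@[simp] lemma snocE_17_0 {α : Type*} (w : Fin 17 → α) (a : α) : (Fin.snoc w a : Fin 18 → α) 0 = w 0 := rfl
@[simp] lemma snocE_17_1 {α : Type*} (w : Fin 17 → α) (a : α) : (Fin.snoc w a : Fin 18 → α) 1 = w 1 := rfl
@[simp] lemma snocE_17_2 {α : Type*} (w : Fin 17 → α) (a : α) : (Fin.snoc w a : Fin 18 → α) 2 = w 2 := rfl
@[simp] lemma snocE_17_3 {α : Type*} (w : Fin 17 → α) (a : α) : (Fin.snoc w a : Fin 18 → α) 3 = w 3 := rfl
@[simp] lemma snocE_17_4 {α : Type*} (w : Fin 17 → α) (a : α) : (Fin.snoc w a : Fin 18 → α) 4 = w 4 := rfl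
@[simp] lemma snocE_17_5 {α : Type*} (w : Fin 17 → α) (a : α) : (Fin.snoc w a : Fin 18 → α) 5 = w 5 := rfl
@[simp] lemma snocE_17_6 {α : Type*} (w : Fin 17 → α) (a : α) : (Fin.snoc w a : Fin 18 → α) 6 = w 6 := rfl
@[simp] lemma snocE_17_7 {α : Type*} (w : Fin 17 → α) (a : α) : (Fin.snoc w a : Fin 18 → α) 7 = w 7 := rfl
@[simp] lemma snocE_17_8 {α : Type*} (w : Fin 17 → α) (a : α) : (Fin.snoc w a : Fin 18 → α) 8 = w 8 := rfl
@[simp] lemma snocE_17_9 {α : Type*} (w : Fin 17 → α) (a : α) : (Fin.snoc w a : Fin 18 → α) 9 = w 9 := rfl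
@[simp] lemma snocE_17_10 {α : Type*} (w : Fin 17 → α) (a : α) : (Fin.snoc w a : Fin 18 → α) 10 = w 10 := rfl
@[simp] lemma snocE_17_11 {α : Type*} (w : Fin 17 → α) (a : α) : (Fin.snoc w a : Fin 18 → α) 11 = w 11 := rfl
@[simp] lemma snocE_17_12 {α : Type*} (w : Fin 17 → α) (a : α) : (Fin.snoc w a : Fin 18 → α) 12 = w 12 := rfl
@[simp] lemma snocE_17_13 {α : Type*} (w : Fin 17 → α) (a : α) : (Fin.snoc w a : Fin 18 → α) 13 = w 13 := rfl
@[simp] lemma snocE_17_14 {α : Type*} (w : Fin 17 → α) (a : α) : (Fin.snoc w a : Fin 18 → α) 14 = w 14 := rfl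
@[simp] lemma snocE_17_15 {α : Type*} (w : Fin 17 → α) (a : α) : (Fin.snoc w a : Fin 18 → α) 15 = w 15 := rfl
@[simp] lemma snocE_17_16 {α : Type*} (w : Fin 17 → α) (a : α) : (Fin.snoc w a : Fin 18 → α) 16 = w 16 := rfl
@[simp] lemma snocE_17_17 {α : Type*} (w : Fin 17 → α) (a : α) : (Fin.snoc w a : Fin 18 → α) 17 = a := rfl
@[simp] lemma snocE_18_0 {α : Type*} (w : Fin 18 → α) (a : α) : (Fin.snoc w a : Fin 19 → α) 0 = w 0 := rfl
@[simp] lemma snocE_18_1 {α : Type*} (w : Fin 18 → α) (a : α) : (Fin.snoc w a : Fin 19 → α) 1 = w 1 := rfl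
@[simp] lemma snocE_18_2 {α : Type*} (w : Fin 18 → α) (a : α) : (Fin.snoc w a : Fin 19 → α) 2 = w 2 := rfl
@[simp] lemma snocE_18_3 {α : Type*} (w : Fin 18 → α) (a : α) : (Fin.snoc w a : Fin 19 → α) 3 = w 3 := rfl
@[simp] lemma snocE_18_4 {α : Type*} (w : Fin 18 → α) (a : α) : (Fin.snoc w a : Fin 19 → α) 4 = w 4 := rfl
@[simp] lemma snocE_18_5 {α : Type*} (w : Fin 18 → α) (a : α) : (Fin.snoc w a : Fin 19 → α) 5 = w 5 := rfl
@[simp] lemma snocE_18_6 {α : Type*} (w : Fin 18 → α) (a : α) : (Fin.snoc w a : Fin 19 → α) 6 = w 6 := rfl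
@[simp] lemma snocE_18_7 {α : Type*} (w : Fin 18 → α) (a : α) : (Fin.snoc w a : Fin 19 → α) 7 = w 7 := rfl
@[simp] lemma snocE_18_8 {α : Type*} (w : Fin 18 → α) (a : α) : (Fin.snoc w a : Fin 19 → α) 8 = w 8 := rfl
@[simp] lemma snocE_18_9 {α : Type*} (w : Fin 18 → α) (a : α) : (Fin.snoc w a : Fin 19 → α) 9 = w 9 := rfl
@[simp] lemma snocE_18_10 {α : Type*} (w : Fin 18 → α) (a : α) : (Fin.snoc w a : Fin 19 → α) 10 = w 10 := rfl
@[simp] lemma snocE_18_11 {α : Type*} (w : Fin 18 → α) (a : α) : (Fin.snoc w a : Fin 19 → α) 11 = w 11 := rfl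
@[simp] lemma snocE_18_12 {α : Type*} (w : Fin 18 → α) (a : α) : (Fin.snoc w a : Fin 19 → α) 12 = w 12 := rfl
@[simp] lemma snocE_18_13 {α : Type*} (w : Fin 18 → α) (a : α) : (Fin.snoc w a : Fin 19 → α) 13 = w 13 := rfl
@[simp] lemma snocE_18_14 {α : Type*} (w : Fin 18 → α) (a : α) : (Fin.snoc w a : Fin 19 → α) 14 = w 14 := rfl
@[simp] lemma snocE_18_15 {α : Type*} (w : Fin 18 → α) (a : α) : (Fin.snoc w a : Fin 19 → α) 15 = w 15 := rfl
@[simp] lemma snocE_18_16 {α : Type*} (w : Fin 18 → α) (a : α) : (Fin.snoc w a : Fin 19 → α) 16 = w 16 := rfl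
@[simp] lemma snocE_18_17 {α : Type*} (w : Fin 18 → α) (a : α) : (Fin.snoc w a : Fin 19 → α) 17 = w 17 := rfl
@[simp] lemma snocE_18_18 {α : Type*} (w : Fin 18 → α) (a : α) : (Fin.snoc w a : Fin 19 → α) 18 = a := rfl
@[simp] lemma snocE_19_0 {α : Type*} (w : Fin 19 → α) (a : α) : (Fin.snoc w a : Fin 20 → α) 0 = w 0 := rfl
@[simp] lemma snocE_19_1 {α : Type*} (w : Fin 19 → α) (a : α) : (Fin.snoc w a : Fin 20 → α) 1 = w 1 := rfl
@[simp] lemma snocE_19_2 {α : Type*} (w : Fin 19 → α) (a : α) : (Fin.snoc w a : Fin 20 → α) 2 = w 2 := rfl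
@[simp] lemma snocE_19_3 {α : Type*} (w : Fin 19 → α) (a : α) : (Fin.snoc w a : Fin 20 → α) 3 = w 3 := rfl
@[simp] lemma snocE_19_4 {α : Type*} (w : Fin 19 → α) (a : α) : (Fin.snoc w a : Fin 20 → α) 4 = w 4 := rfl
@[simp] lemma snocE_19_5 {α : Type*} (w : Fin 19 → α) (a : α) : (Fin.snoc w a : Fin 20 → α) 5 = w 5 := rfl
@[simp] lemma snocE_19_6 {α : Type*} (w : Fin 19 → α) (a : α) : (Fin.snoc w a : Fin 20 → α) 6 = w 6 := rfl
@[simp] lemma snocE_19_7 {α : Type*} (w : Fin 19 → α) (a : α) : (Fin.snoc w a : Fin 20 → α) 7 = w 7 := rfl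
@[simp] lemma snocE_19_8 {α : Type*} (w : Fin 19 → α) (a : α) : (Fin.snoc w a : Fin 20 → α) 8 = w 8 := rfl
@[simp] lemma snocE_19_9 {α : Type*} (w : Fin 19 → α) (a : α) : (Fin.snoc w a : Fin 20 → α) 9 = w 9 := rfl
@[simp] lemma snocE_19_10 {α : Type*} (w : Fin 19 → α) (a : α) : (Fin.snoc w a : Fin 20 → α) 10 = w 10 := rfl
@[simp] lemma snocE_19_11 {α : Type*} (w : Fin 19 → α) (a : α) : (Fin.snoc w a : Fin 20 → α) 11 = w 11 := rfl
@[simp] lemma snocE_19_12 {α : Type*} (w : Fin 19 → α) (a : α) : (Fin.snoc w a : Fin 20 → α) 12 = w 12 := rfl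
@[simp] lemma snocE_19_13 {α : Type*} (w : Fin 19 → α) (a : α) : (Fin.snoc w a : Fin 20 → α) 13 = w 13 := rfl
@[simp] lemma snocE_19_14 {α : Type*} (w : Fin 19 → α) (a : α) : (Fin.snoc w a : Fin 20 → α) 14 = w 14 := rfl
@[simp] lemma snocE_19_15 {α : Type*} (w : Fin 19 → α) (a : α) : (Fin.snoc w a : Fin 20 → α) 15 = w 15 := rfl
@[simp] lemma snocE_19_16 {α : Type*} (w : Fin 19 → α) (a : α) : (Fin.snoc w a : Fin 20 → α) 16 = w 16 := rfl
@[simp] lemma snocE_19_17 {α : Type*} (w : Fin 19 → α) (a : α) : (Fin.snoc w a : Fin 20 → α) 17 = w 17 := rfl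
@[simp] lemma snocE_19_18 {α : Type*} (w : Fin 19 → α) (a : α) : (Fin.snoc w a : Fin 20 → α) 18 = w 18 := rfl
@[simp] lemma snocE_19_19 {α : Type*} (w : Fin 19 → α) (a : α) : (Fin.snoc w a : Fin 20 → α) 19 = a := rfl

end SnocEval

section Xi
open FirstOrder.Language FirstOrder

/-- entry type of formula encodings -/
abbrev Ent := (Σ k, LA.Term (Empty ⊕ Fin k)) ⊕ ((Σ n, LA.Relations n) ⊕ ℕ)

/-- trailing tags -/
def SFX : List Ent := [.inr (.inr 4), .inr (.inr 4), .inr (.inr 4), .inr (.inr 4),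
  .inr (.inr 4), .inr (.inr 3), .inr (.inr 3), .inr (.inr 2)]

/-- encode of the trailing tags -/
def K0 : ℕ := Encodable.encode SFX

/-- body of the certificate formula -/
def XiBody : AF 3 :=
  .bex (vr 0) <| -- j = 3
  .bex (vr 0) <| -- d₁ = 4
  .bex (vr 0) <| -- d₂ = 5
  .bex (vr 0) <| -- p₁ = 6
  .bex (vr 1) <| -- e₁ = 7
  .bex (vr 1) <| -- e₂ = 8
  .bex (vr 1) <| -- f₁ = 9
  .bex (vr 1) <| -- f₂ = 10
  .bex (vr 1) <| -- s₁ = 11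
  .bex (vr 1) <| -- s₂ = 12
  .bex (vr 1) <| -- s₃ = 13
  (pairF (vr 4) (vr 5) (vr 6)).an <|
  (pairF (vr 3) (vr 6) (vr 0)).an <|
  (pairF (vr 10) (vr 2) (vr 11)).an <|
  (pairF (vr 9) (vr 11) (vr 12)).an <|
  (pairF (vr 8) (vr 12) (vr 13)).an <|
  (pairF (vr 7) (vr 13) (vr 1)).an <|
  (betaF (vr 7) (vr 8) zeroT (num 3)).an <|
  (AF.ball (vr 0) <| (AF.lt (vr 14) (vr 0)).impl <|
    .bex (vr 7) <| (betaF (vr 7) (vr 8) (vr 14) (vr 15)).an <|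
    .bex (vr 7) <| (betaF (vr 7) (vr 8) (succT (vr 14)) (vr 16)).an <|
    .bex (vr 16) <| (pairF (num 3) (vr 15) (vr 17)).an (AF.eq (vr 16) (succT (vr 17)))).an <|
  (AF.bex (vr 7) <| (betaF (vr 7) (vr 8) (vr 0) (vr 14)).an <|
    .bex (vr 1) <| (pairF (num 2) (vr 14) (vr 15)).an <|
    .bex (vr 9) <| (betaF (vr 9) (vr 10) zeroT (vr 16)).an <|
    .bex (vr 16) <| (pairF (mulT (num 2) (vr 15)) (num K0) (vr 17)).an
      (AF.eq (vr 16) (succT (vr 17)))).an <|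
  (AF.ball (vr 0) <| (AF.lt (vr 14) (vr 3)).impl <|
    .bex (vr 9) <| (betaF (vr 9) (vr 10) (vr 14) (vr 15)).an <|
    .bex (vr 9) <| (betaF (vr 9) (vr 10) (succT (vr 14)) (vr 16)).an <|
    .bex (vr 4) <| (betaF (vr 4) (vr 5) (vr 14) (vr 17)).an <|
    .bex (vr 16) <| (pairF (vr 17) (vr 15) (vr 18)).an (AF.eq (vr 16) (succT (vr 18)))).an
  (betaF (vr 9) (vr 10) (vr 3) (vr 2))

/-- the certificate formula -/
def Xi : AF 3 := (AF.le (vr 2) (vr 1)).an XiBody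

end Xi

section XiSem

/-- plain ℕ-statement of the certificate -/
def XiN (x c y : ℕ) : Prop :=
  y ≤ c ∧
  ∃ j ≤ x, ∃ d₁ ≤ x, ∃ d₂ ≤ x, ∃ p₁ ≤ x,
  ∃ e₁ ≤ c, ∃ e₂ ≤ c, ∃ f₁ ≤ c, ∃ f₂ ≤ c, ∃ s₁ ≤ c, ∃ s₂ ≤ c, ∃ s₃ ≤ c,
  p₁ = Nat.pair d₁ d₂ ∧
  x = Nat.pair j p₁ ∧
  s₁ = Nat.pair f₂ y ∧
  s₂ = Nat.pair f₁ s₁ ∧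
  s₃ = Nat.pair e₂ s₂ ∧
  c = Nat.pair e₁ s₃ ∧
  3 = beta e₁ e₂ 0 ∧
  (∀ i ≤ x, i < x → ∃ u ≤ e₁, u = beta e₁ e₂ i ∧
    ∃ u' ≤ e₁, u' = beta e₁ e₂ (i+1) ∧ ∃ p ≤ u', p = Nat.pair 3 u ∧ u' = p + 1) ∧
  (∃ ax ≤ e₁, ax = beta e₁ e₂ x ∧ ∃ pe ≤ c, pe = Nat.pair 2 ax ∧
    ∃ v0 ≤ f₁, v0 = beta f₁ f₂ 0 ∧ ∃ pv ≤ v0, pv = Nat.pair (2 * pe) K0 ∧ v0 = pv + 1) ∧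
  (∀ i ≤ x, i < j → ∃ v ≤ f₁, v = beta f₁ f₂ i ∧
    ∃ v' ≤ f₁, v' = beta f₁ f₂ (i+1) ∧ ∃ wv ≤ d₁, wv = beta d₁ d₂ i ∧
    ∃ pv ≤ v', pv = Nat.pair wv v ∧ v' = pv + 1) ∧
  y = beta f₁ f₂ j

set_option maxHeartbeats 2000000 in
lemma nsem_Xi (x c y : ℕ) : nsem Xi ![x, c, y] ↔ XiN x c y := by
  rw [XiN]
  simp only [Xi, XiBody, nsem_an, nsem_bex, nsem_ball, nsem_impl,
    nsem_lt, nsem_eq, nsem_le, nsem_pairF, nsem_betaF, valT_vr, valT_succT, valT_zeroT,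
    valT_num, valT_mulT, Matrix.cons_val_zero, Matrix.cons_val_one, Matrix.head_cons,
    Matrix.cons_val_two, Matrix.tail_cons,
    snocE_3_0,
    snocE_3_1,
    snocE_3_2,
    snocE_3_3,
    snocE_4_0,
    snocE_4_1,
    snocE_4_2,
    snocE_4_3,
    snocE_4_4,
    snocE_5_0,
    snocE_5_1,
    snocE_5_2,
    snocE_5_3,
    snocE_5_4,
    snocE_5_5,
    snocE_6_0,
    snocE_6_1,
    snocE_6_2,
    snocE_6_3,
    snocE_6_4,
    snocE_6_5,
    snocE_6_6,
    snocE_7_0,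
    snocE_7_1,
    snocE_7_2,
    snocE_7_3,
    snocE_7_4,
    snocE_7_5,
    snocE_7_6,
    snocE_7_7,
    snocE_8_0,
    snocE_8_1,
    snocE_8_2,
    snocE_8_3,
    snocE_8_4,
    snocE_8_5,
    snocE_8_6,
    snocE_8_7,
    snocE_8_8,
    snocE_9_0,
    snocE_9_1,
    snocE_9_2,
    snocE_9_3,
    snocE_9_4,
    snocE_9_5,
    snocE_9_6,
    snocE_9_7,
    snocE_9_8,
    snocE_9_9,
    snocE_10_0,
    snocE_10_1,
    snocE_10_2,
    snocE_10_3,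
    snocE_10_4,
    snocE_10_5,
    snocE_10_6,
    snocE_10_7,
    snocE_10_8,
    snocE_10_9,
    snocE_10_10,
    snocE_11_0,
    snocE_11_1,
    snocE_11_2,
    snocE_11_3,
    snocE_11_4,
    snocE_11_5,
    snocE_11_6,
    snocE_11_7,
    snocE_11_8,
    snocE_11_9,
    snocE_11_10,
    snocE_11_11,
    snocE_12_0,
    snocE_12_1,
    snocE_12_2,
    snocE_12_3,
    snocE_12_4,
    snocE_12_5,
    snocE_12_6,
    snocE_12_7,
    snocE_12_8,
    snocE_12_9,
    snocE_12_10,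
    snocE_12_11,
    snocE_12_12,
    snocE_13_0,
    snocE_13_1,
    snocE_13_2,
    snocE_13_3,
    snocE_13_4,
    snocE_13_5,
    snocE_13_6,
    snocE_13_7,
    snocE_13_8,
    snocE_13_9,
    snocE_13_10,
    snocE_13_11,
    snocE_13_12,
    snocE_13_13,
    snocE_14_0,
    snocE_14_1,
    snocE_14_2,
    snocE_14_3,
    snocE_14_4,
    snocE_14_5,
    snocE_14_6,
    snocE_14_7,
    snocE_14_8,
    snocE_14_9,
    snocE_14_10,
    snocE_14_11,
    snocE_14_12,
    snocE_14_13,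
    snocE_14_14,
    snocE_15_0,
    snocE_15_1,
    snocE_15_2,
    snocE_15_3,
    snocE_15_4,
    snocE_15_5,
    snocE_15_6,
    snocE_15_7,
    snocE_15_8,
    snocE_15_9,
    snocE_15_10,
    snocE_15_11,
    snocE_15_12,
    snocE_15_13,
    snocE_15_14,
    snocE_15_15,
    snocE_16_0,
    snocE_16_1,
    snocE_16_2,
    snocE_16_3,
    snocE_16_4,
    snocE_16_5,
    snocE_16_6,
    snocE_16_7,
    snocE_16_8,
    snocE_16_9,
    snocE_16_10,
    snocE_16_11,
    snocE_16_12,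
    snocE_16_13,
    snocE_16_14,
    snocE_16_15,
    snocE_16_16,
    snocE_17_0,
    snocE_17_1,
    snocE_17_2,
    snocE_17_3,
    snocE_17_4,
    snocE_17_5,
    snocE_17_6,
    snocE_17_7,
    snocE_17_8,
    snocE_17_9,
    snocE_17_10,
    snocE_17_11,
    snocE_17_12,
    snocE_17_13,
    snocE_17_14,
    snocE_17_15,
    snocE_17_16,
    snocE_17_17,
    snocE_18_0,
    snocE_18_1,
    snocE_18_2,
    snocE_18_3,
    snocE_18_4,
    snocE_18_5,
    snocE_18_6,
    snocE_18_7,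
    snocE_18_8,
    snocE_18_9,
    snocE_18_10,
    snocE_18_11,
    snocE_18_12,
    snocE_18_13,
    snocE_18_14,
    snocE_18_15,
    snocE_18_16,
    snocE_18_17,
    snocE_18_18,
    snocE_19_0,
    snocE_19_1,
    snocE_19_2,
    snocE_19_3,
    snocE_19_4,
    snocE_19_5,
    snocE_19_6,
    snocE_19_7,
    snocE_19_8,
    snocE_19_9,
    snocE_19_10,
    snocE_19_11,
    snocE_19_12,
    snocE_19_13,
    snocE_19_14,
    snocE_19_15,
    snocE_19_16,
    snocE_19_17,
    snocE_19_18,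
    snocE_19_19]

/-- the A-recurrence: code of the numeral `n` -/
def Afun : ℕ → ℕ := fun n => Nat.rec 3 (fun _ u => Nat.pair 3 u + 1) n

@[simp] lemma Afun_zero : Afun 0 = 3 := rfl
@[simp] lemma Afun_succ (n : ℕ) : Afun (n+1) = Nat.pair 3 (Afun n) + 1 := rfl

/-- the V-recurrence: the fold computing the Gödel number -/
def Vfun (d₁ d₂ a0 : ℕ) : ℕ → ℕ := fun n =>
  Nat.rec (Nat.pair (2 * Nat.pair 2 a0) K0 + 1) (fun i v => Nat.pair (beta d₁ d₂ i) v + 1) n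

@[simp] lemma Vfun_zero (d₁ d₂ a0 : ℕ) :
    Vfun d₁ d₂ a0 0 = Nat.pair (2 * Nat.pair 2 a0) K0 + 1 := rfl
@[simp] lemma Vfun_succ (d₁ d₂ a0 n : ℕ) :
    Vfun d₁ d₂ a0 (n+1) = Nat.pair (beta d₁ d₂ n) (Vfun d₁ d₂ a0 n) + 1 := rfl

/-- the value computed from the packed data `x` -/
def Val (x : ℕ) : ℕ :=
  Vfun x.unpair.2.unpair.1 x.unpair.2.unpair.2 (Afun x) x.unpair.1

lemma XiN_val {x c y : ℕ} (h : XiN x c y) : y = Val x := by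
  obtain ⟨hyc, j, hj, d₁, hd₁, d₂, hd₂, p₁, hp₁, e₁, he₁, e₂, he₂, f₁, hf₁, f₂, hf₂,
    s₁, hs₁, s₂, hs₂, s₃, hs₃, hP1, hX, hS1, hS2, hS3, hC, hB0, hRec, hMid, hVRec, hY⟩ := h
  have hup : x.unpair = (j, p₁) := by rw [hX, Nat.unpair_pair]
  have hup2 : p₁.unpair = (d₁, d₂) := by rw [hP1, Nat.unpair_pair]
  have hU : ∀ i, i ≤ x → beta e₁ e₂ i = Afun i := by
    intro i
    induction i with
    | zero => intro _; exact hB0.symm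
    | succ i ih =>
      intro hsx
      have h1 : i ≤ x := Nat.le_of_succ_le hsx
      have h2 : i < x := hsx
      obtain ⟨u, _, hu, u', _, hu', p, _, hp, hpe⟩ := hRec i h1 h2
      rw [← hu', hpe, hp, hu, ih h1, Afun_succ]
  obtain ⟨ax, _, hax, pe, _, hpe, v0, _, hv0, pv, _, hpv, hv0e⟩ := hMid
  have haxA : ax = Afun x := by rw [hax, hU x (le_refl x)]
  have hjx : j ≤ x := by rw [hX]; exact Nat.left_le_pair _ _
  have hV : ∀ i, i ≤ j → beta f₁ f₂ i = Vfun d₁ d₂ (Afun x) i := by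
    intro i
    induction i with
    | zero =>
      intro _
      rw [← hv0, hv0e, hpv, hpe, haxA, Vfun_zero]
    | succ i ih =>
      intro hij
      have h1 : i < j := hij
      have h2 : i ≤ x := le_trans (Nat.le_of_succ_le hij) hjx
      obtain ⟨v, _, hv, v', _, hv', wv, _, hwv, pv', _, hpv', hv'e⟩ := hVRec i h2 h1
      rw [← hv', hv'e, hpv', hwv, hv, ih (le_trans (Nat.le_succ i) hij), Vfun_succ]
  rw [hY, hV j (le_refl j), Val, hup]
  simp only [hup2]

lemma le_pair_right_trans {a b c : ℕ} (h : a ≤ b) : a ≤ Nat.pair c b :=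
  le_trans h (Nat.right_le_pair _ _)

lemma XiN_exists (x : ℕ) : ∃ c, XiN x c (Val x) := by
  set j := x.unpair.1 with hjdef
  set p₁ := x.unpair.2 with hp1def
  set d₁ := p₁.unpair.1 with hd1def
  set d₂ := p₁.unpair.2 with hd2def
  obtain ⟨e₁, e₂, hbe⟩ := beta_lemma (List.ofFn (fun i : Fin (x+1) => Afun i))
  obtain ⟨f₁, f₂, hbf⟩ := beta_lemma (List.ofFn (fun i : Fin (j+1) => Vfun d₁ d₂ (Afun x) i))
  have hbe' : ∀ i ≤ x, beta e₁ e₂ i = Afun i := by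
    intro i hi
    have hl : i < (List.ofFn (fun i : Fin (x+1) => Afun i)).length := by
      simpa using Nat.lt_succ_of_le hi
    rw [hbe i hl, List.get_ofFn]
    simp
  have hbf' : ∀ i ≤ j, beta f₁ f₂ i = Vfun d₁ d₂ (Afun x) i := by
    intro i hi
    have hl : i < (List.ofFn (fun i : Fin (j+1) => Vfun d₁ d₂ (Afun x) i)).length := by
      simpa using Nat.lt_succ_of_le hi
    rw [hbf i hl, List.get_ofFn]
    simp
  set y := Vfun d₁ d₂ (Afun x) j with hydef
  have hVal : Val x = y := rfl
  set s₁ := Nat.pair f₂ y with hs1def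
  set s₂ := Nat.pair f₁ s₁ with hs2def
  set s₃ := Nat.pair e₂ s₂ with hs3def
  refine ⟨Nat.pair e₁ s₃, ?_⟩
  set c := Nat.pair e₁ s₃ with hcdef
  have hyc : y ≤ c := by
    apply le_pair_right_trans
    apply le_pair_right_trans
    apply le_pair_right_trans
    exact Nat.right_le_pair _ _
  have hVmono : ∀ i, Vfun d₁ d₂ (Afun x) 0 ≤ Vfun d₁ d₂ (Afun x) i := by
    intro i
    induction i with
    | zero => exact le_refl _
    | succ i ih =>
      refine le_trans ih ?_
      rw [Vfun_succ]
      exact le_trans (Nat.right_le_pair _ _) (Nat.le_succ _)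
  rw [hVal]
  refine ⟨hyc, j, ?_, d₁, ?_, d₂, ?_, p₁, ?_, e₁, Nat.left_le_pair _ _,
    e₂, le_pair_right_trans (Nat.left_le_pair _ _),
    f₁, le_pair_right_trans (le_pair_right_trans (Nat.left_le_pair _ _)),
    f₂, le_pair_right_trans (le_pair_right_trans (le_pair_right_trans (Nat.left_le_pair _ _))),
    s₁, le_pair_right_trans (le_pair_right_trans (Nat.right_le_pair _ _)),
    s₂, le_pair_right_trans (Nat.right_le_pair _ _),
    s₃, Nat.right_le_pair _ _,
    (Nat.pair_unpair p₁).symm, by rw [hp1def, hjdef]; exact (Nat.pair_unpair x).symm,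
    rfl, rfl, rfl, rfl, (hbe' 0 (Nat.zero_le x)).trans Afun_zero |>.symm, ?_, ?_, ?_, ?_⟩
  · rw [hjdef]; exact Nat.unpair_left_le x
  · rw [hd1def, hp1def]
    exact le_trans (Nat.unpair_left_le p₁) (Nat.unpair_right_le x)
  · rw [hd2def, hp1def]
    exact le_trans (Nat.unpair_right_le p₁) (Nat.unpair_right_le x)
  · rw [hp1def]; exact Nat.unpair_right_le x
  · -- the A recurrence certificate
    intro i hix hltx
    refine ⟨beta e₁ e₂ i, Nat.mod_le _ _, rfl, beta e₁ e₂ (i+1), Nat.mod_le _ _, rfl,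
      Nat.pair 3 (beta e₁ e₂ i), ?_, rfl, ?_⟩
    · rw [hbe' (i+1) hltx, hbe' i hix, Afun_succ]
      exact Nat.le_succ _
    · rw [hbe' (i+1) hltx, hbe' i hix, Afun_succ]
  · -- the middle certificate
    refine ⟨beta e₁ e₂ x, Nat.mod_le _ _, rfl, Nat.pair 2 (Afun x), ?_, ?_,
      beta f₁ f₂ 0, Nat.mod_le _ _, rfl, Nat.pair (2 * Nat.pair 2 (Afun x)) K0, ?_, rfl, ?_⟩
    · refine le_trans ?_ hyc
      rw [hydef]
      refine le_trans ?_ (hVmono j)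
      rw [Vfun_zero]
      calc Nat.pair 2 (Afun x) ≤ 2 * Nat.pair 2 (Afun x) := by omega
        _ ≤ Nat.pair (2 * Nat.pair 2 (Afun x)) K0 := Nat.left_le_pair _ _
        _ ≤ _ := Nat.le_succ _
    · rw [hbe' x (le_refl x)]
    · rw [hbf' 0 (Nat.zero_le j), Vfun_zero]
      exact Nat.le_succ _
    · rw [hbf' 0 (Nat.zero_le j), Vfun_zero]
  · -- the V recurrence certificate
    intro i hix hij
    refine ⟨beta f₁ f₂ i, Nat.mod_le _ _, rfl, beta f₁ f₂ (i+1), Nat.mod_le _ _, rfl,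
      beta d₁ d₂ i, Nat.mod_le _ _, rfl,
      Nat.pair (beta d₁ d₂ i) (beta f₁ f₂ i), ?_, rfl, ?_⟩
    · rw [hbf' (i+1) hij, hbf' i (le_trans (Nat.le_succ i) hij), Vfun_succ]
      exact Nat.le_succ _
    · rw [hbf' (i+1) hij, hbf' i (le_trans (Nat.le_succ i) hij), Vfun_succ]
  · exact (hbf' j (le_refl j)).symm

end XiSem

section Delta
open FirstOrder.Language FirstOrder.Language.BoundedFormula FirstOrder

/-- strict order formula -/
def ltB {n : ℕ} (s t : ATm n) : LA.BoundedFormula Empty n := leB (succT s) t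

/-- the compiled certificate with minimality: `Delta(y, x')` says
`y` is the value coded by the least certificate for `x'`. -/
def Delta : LA.BoundedFormula Empty 2 :=
  BoundedFormula.ex ((Xi.compile (![1, 2, 0] : Fin 3 → Fin 3)) ⊓
    (BoundedFormula.all ((ltB (vr (3 : Fin 4)) (vr (2 : Fin 4))).imp
      (BoundedFormula.ex (Xi.compile (![1, 3, 4] : Fin 3 → Fin 5))).not)))

variable {M : Type} [LA.Structure M]

lemma realize_ltB {n : ℕ} (s t : ATm n) (v : Empty → M) (xs : Fin n → M) :
    (ltB s t).Realize v xs ↔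
      mLT (Term.realize (Sum.elim v xs) s) (Term.realize (Sum.elim v xs) t) := by
  rw [ltB, realize_leB, realize_succT]
  exact Iff.rfl

lemma xi_le_extract (hq : QM M) {n : ℕ} (ρ : Fin 3 → Fin n) (xs : Fin n → M)
    (h : (Xi.compile ρ).Realize vE xs) : mLE (xs (ρ 2)) (xs (ρ 1)) := by
  rw [Xi] at h
  rw [show (AF.an (AF.le (vr 2) (vr 1)) XiBody).compile ρ
      = (AF.le (vr 2) (vr 1)).compile ρ ⊓ XiBody.compile ρ from rfl,
    BoundedFormula.realize_inf] at h
  have h1 := h.1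
  rw [show (AF.le (vr 2) (vr 1)).compile ρ = leB (vr (ρ 2)) (vr (ρ 1)) from rfl,
    realize_leB, realize_vr, realize_vr] at h1
  exact h1

attribute [local instance] Classical.propDecidable

/-- the least certificate -/
noncomputable def cmin (b : ℕ) : ℕ := Nat.find (XiN_exists b)

lemma cmin_spec (b : ℕ) : XiN b (cmin b) (Val b) := Nat.find_spec (XiN_exists b)

lemma cmin_min {b k : ℕ} (hk : k < cmin b) (y : ℕ) : ¬ XiN b k y := by
  intro h
  have h2 : y = Val b := XiN_val h
  exact Nat.find_min (XiN_exists b) hk (h2 ▸ h)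

lemma delta_repr (hq : QM M) (b : ℕ) (a : M) :
    Delta.Realize vE (![a, std b] : Fin 2 → M) ↔ a = std (Val b) := by
  constructor
  · intro h
    rw [Delta, BoundedFormula.realize_ex] at h
    obtain ⟨cc, hcc⟩ := h
    rw [BoundedFormula.realize_inf] at hcc
    obtain ⟨h1, h2⟩ := hcc
    rcases hq.tri (cmin b) cc with hle | hlt
    · -- cc standard, extract everything
      obtain ⟨k, hk, rfl⟩ := hq.mLE_std hle
      have hxle := xi_le_extract hq _ _ h1
      simp only [Matrix.cons_val_one, Matrix.cons_val_two, Matrix.head_cons,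
        Matrix.tail_cons, Matrix.cons_val_zero, snocE_2_0, snocE_2_1, snocE_2_2] at hxle
      obtain ⟨m, hm, rfl⟩ := hq.mLE_std hxle
      have habs := (hq.abs Xi (![1, 2, 0] : Fin 3 → Fin 3) ![b, k, m]
        (Fin.snoc ![std m, std b] (std k)) ?_).1 h1
      · rw [nsem_Xi] at habs
        rw [XiN_val habs]
      · intro i
        fin_cases i <;> simp
    · -- cc > cmin: contradict minimality
      exfalso
      have h2' := h2 (std (cmin b))
      rw [BoundedFormula.realize_imp] at h2'
      have hant : (ltB (vr (3 : Fin 4)) (vr (2 : Fin 4))).Realize vE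
          (Fin.snoc (Fin.snoc ![a, std b] cc) (std (cmin b))) := by
        rw [realize_ltB, realize_vr, realize_vr]
        simpa using hlt
      have hcons := h2' hant
      rw [BoundedFormula.realize_not, BoundedFormula.realize_ex] at hcons
      apply hcons
      refine ⟨std (Val b), ?_⟩
      refine (hq.abs Xi (![1, 3, 4] : Fin 3 → Fin 5) ![b, cmin b, Val b] _ ?_).2 ?_
      · intro i
        fin_cases i <;> simp
      · rw [nsem_Xi]
        exact cmin_spec b
  · intro h
    subst h
    rw [Delta, BoundedFormula.realize_ex]
    refine ⟨std (cmin b), ?_⟩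
    rw [BoundedFormula.realize_inf]
    constructor
    · refine (hq.abs Xi (![1, 2, 0] : Fin 3 → Fin 3) ![b, cmin b, Val b] _ ?_).2 ?_
      · intro i
        fin_cases i <;> simp
      · rw [nsem_Xi]
        exact cmin_spec b
    · rw [BoundedFormula.realize_all]
      intro z
      rw [BoundedFormula.realize_imp, realize_ltB, realize_vr, realize_vr]
      intro hant
      simp only [snocE_3_3, snocE_3_2, snocE_2_2] at hant
      obtain ⟨k, hk, rfl⟩ := hq.mLT_std hant
      rw [BoundedFormula.realize_not, BoundedFormula.realize_ex]
      rintro ⟨yy, hyy⟩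
      have hxle := xi_le_extract hq _ _ hyy
      simp only [Matrix.cons_val_one, Matrix.head_cons, snocE_4_4, snocE_4_3] at hxle
      obtain ⟨m, hm, rfl⟩ := hq.mLE_std hxle
      have habs := (hq.abs Xi (![1, 3, 4] : Fin 3 → Fin 5) ![b, k, m] _ ?_).1 hyy
      · rw [nsem_Xi] at habs
        exact cmin_min hk m habs
      · intro i
        fin_cases i <;> simp
end Delta

section QMmodel
open FirstOrder.Language FirstOrder

variable {M : Type} [LA.Structure M] [Nonempty M]

lemma qm_of_model (h : ∀ φ ∈ Q, M ⊨ φ) : QM M := by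
  have h1 := h (∀' ∼(succT &0 =' zeroT)) (by rw [Q]; exact Set.mem_insert _ _)
  have h2 := h (∀' ∀' (succT &0 =' succT &1 ⟹ &0 =' &1))
    (by rw [Q]; exact Set.mem_insert_of_mem _ (Set.mem_insert _ _))
  have h3 := h (∀' ((&0 =' zeroT) ⊔ ∃' (&0 =' succT &1)))
    (by rw [Q]; exact Set.mem_insert_of_mem _ (Set.mem_insert_of_mem _ (Set.mem_insert _ _)))
  have h4 := h (∀' (addT &0 zeroT =' &0))
    (by rw [Q]; exact Set.mem_insert_of_mem _ (Set.mem_insert_of_mem _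
      (Set.mem_insert_of_mem _ (Set.mem_insert _ _))))
  have h5 := h (∀' ∀' (addT &0 (succT &1) =' succT (addT &0 &1)))
    (by rw [Q]; exact Set.mem_insert_of_mem _ (Set.mem_insert_of_mem _
      (Set.mem_insert_of_mem _ (Set.mem_insert_of_mem _ (Set.mem_insert _ _)))))
  have h6 := h (∀' (mulT &0 zeroT =' zeroT))
    (by rw [Q]; exact Set.mem_insert_of_mem _ (Set.mem_insert_of_mem _
      (Set.mem_insert_of_mem _ (Set.mem_insert_of_mem _ (Set.mem_insert_of_mem _
        (Set.mem_insert _ _))))))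
  have h7 := h (∀' ∀' (mulT &0 (succT &1) =' addT (mulT &0 &1) &0))
    (by rw [Q]; exact Set.mem_insert_of_mem _ (Set.mem_insert_of_mem _
      (Set.mem_insert_of_mem _ (Set.mem_insert_of_mem _ (Set.mem_insert_of_mem _
        (Set.mem_insert_of_mem _ (Set.mem_singleton_iff.2 rfl)))))))
  simp only [Sentence.Realize, Formula.Realize, BoundedFormula.realize_all,
    BoundedFormula.realize_not, BoundedFormula.realize_bdEqual, BoundedFormula.realize_sup,
    BoundedFormula.realize_ex, BoundedFormula.realize_imp,
    realize_succT, realize_zeroT, realize_addT, realize_mulT, Term.realize_var,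
    Sum.elim_inr, Function.comp_apply, snocE_0_0, snocE_1_0, snocE_1_1] at h1 h2 h3 h4 h5 h6 h7
  exact ⟨h1, h2, h3, h4, h5, h6, h7⟩

end QMmodel

section Encoding
open FirstOrder.Language FirstOrder Encodable

/-- the self-reference atom -/
def Atom (b : ℕ) : LA.BoundedFormula Empty 2 :=
  BoundedFormula.equal (vr (1 : Fin 2)) (num b)

/-- `C` with its free variable pointed at the bound variable `y` -/
def C2 (C : LA.Formula (Fin 1)) : LA.BoundedFormula Empty 2 :=
  (BoundedFormula.relabel (fun _ => Sum.inr 0) C : LA.BoundedFormula Empty (2+0))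

/-- the Gödel sentence for parameter `b` -/
def Gform (C : LA.Formula (Fin 1)) (b : ℕ) : LA.Sentence :=
  BoundedFormula.ex (BoundedFormula.ex (Delta ⊓ ((C2 C) ⊓ (Atom b))))

/-- tags -/
def i0 : Ent := Sum.inr (Sum.inr 0)
def i1 : Ent := Sum.inr (Sum.inr 1)

/-- prefix of the code of `Gform` before the numeral entry -/
def Pfx (C : LA.Formula (Fin 1)) : List Ent :=
  [i0,i1,i0,i0,i1,i0,i0,i0] ++ Delta.listEncode ++ [i0,i0,i0]
    ++ (C2 C).listEncode ++ [i0, Sum.inl ⟨2, (vr (1 : Fin 2) : ATm 2)⟩]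

lemma inf_def {α : Type} {n : ℕ} (φ ψ : LA.BoundedFormula α n) :
    φ ⊓ ψ = (φ.imp ψ.not).not := rfl

lemma listEncode_bot {α : Type} {n : ℕ} :
    (⊥ : LA.BoundedFormula α n).listEncode = [Sum.inr (Sum.inr (n+2))] := rfl

lemma listEncode_G_gen (D E : LA.BoundedFormula Empty 2) (b : ℕ) :
    (BoundedFormula.ex (BoundedFormula.ex (D ⊓ (E ⊓ Atom b)))).listEncode
      = ([i0,i1,i0,i0,i1,i0,i0,i0] ++ D.listEncode ++ [i0,i0,i0]
          ++ E.listEncode ++ [i0, Sum.inl ⟨2, (vr (1 : Fin 2) : ATm 2)⟩])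
        ++ ([Sum.inl ⟨2, (num b : ATm 2)⟩] ++ SFX) := by
  simp only [SFX, Atom, inf_def, BoundedFormula.ex, BoundedFormula.not,
    BoundedFormula.listEncode, listEncode_bot, i0, i1, List.cons_append, List.append_assoc,
    List.nil_append, List.singleton_append, List.append_nil]

lemma listEncode_Gform (C : LA.Formula (Fin 1)) (b : ℕ) :
    (Gform C b).listEncode = Pfx C ++ ([Sum.inl ⟨2, (num b : ATm 2)⟩] ++ SFX) := by
  rw [Gform, listEncode_G_gen, Pfx]
  try simp only [List.cons_append, List.append_assoc, List.nil_append]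

/-- encoding step -/
def stepE : Ent → ℕ → ℕ := fun e k => Nat.pair (Encodable.encode e) k + 1

lemma encode_cons (e : Ent) (l : List Ent) :
    (Encodable.encode (e :: l) : ℕ) = stepE e (Encodable.encode l) := rfl

lemma encode_append (l₁ l₂ : List Ent) :
    Encodable.encode (l₁ ++ l₂) = List.foldr stepE (Encodable.encode l₂) l₁ := by
  induction l₁ with
  | nil => rfl
  | cons e l ih => rw [List.cons_append, encode_cons, List.foldr_cons, ih]

set_option maxRecDepth 100000 in
lemma encode_num_A (n : ℕ) :
    (Encodable.encode (num n : ATm 2) : ℕ) = Afun n := by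
  induction n with
  | zero =>
    show Encodable.encode (Term.listEncode (num 0 : ATm 2)) = 3
    have h1 : Term.listEncode (num 0 : ATm 2) = [Sum.inr ⟨0, ArithFunc.zero⟩] := by
      simp [num, zeroT, Term.listEncode]
    rw [h1, Encodable.encode_list_cons]
    rfl
  | succ n ih =>
    show Encodable.encode (Term.listEncode (num (n+1) : ATm 2)) = _
    have h1 : Term.listEncode (num (n+1) : ATm 2)
        = Sum.inr ⟨1, ArithFunc.succ⟩ :: Term.listEncode (num n : ATm 2) := by
      simp [num, succT, Term.listEncode, List.finRange_succ, List.finRange_zero]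
    rw [h1]
    rw [Encodable.encode_list_cons]
    show Nat.pair 3 (Encodable.encode (Term.listEncode (num n : ATm 2))) + 1 = _
    rw [show Encodable.encode (Term.listEncode (num n : ATm 2))
      = Encodable.encode (num n : ATm 2) from rfl, ih, Afun_succ]

lemma encode_numEntry (b : ℕ) :
    (Encodable.encode (Sum.inl ⟨2, (num b : ATm 2)⟩ : Ent) : ℕ)
      = 2 * Nat.pair 2 (Afun b) := by
  rw [show (Encodable.encode (Sum.inl ⟨2, (num b : ATm 2)⟩ : Ent) : ℕ)
    = 2 * Nat.pair 2 (Encodable.encode (num b : ATm 2)) from rfl, encode_num_A]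

lemma getElem_idx_congr {α : Type*} (l : List α) {a b : ℕ} (h : a = b) (ha : a < l.length) :
    l[a]'ha = l[b]'(h ▸ ha) := by subst h; rfl

lemma fold_drop (l : List Ent) (d₁ d₂ a0 : ℕ)
    (h : ∀ i (hi : i < l.length), beta d₁ d₂ i
      = Encodable.encode (l[l.length - (i+1)]'(by omega))) :
    ∀ i, i ≤ l.length →
      List.foldr stepE (Vfun d₁ d₂ a0 0) (l.drop (l.length - i)) = Vfun d₁ d₂ a0 i := by
  intro i
  induction i with
  | zero => intro _; rw [Nat.sub_zero, List.drop_length]; rfl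
  | succ i ih =>
    intro hi
    have hn : l.length - (i+1) < l.length := by omega
    rw [List.drop_eq_getElem_cons hn, List.foldr_cons]
    have he : l.length - (i+1) + 1 = l.length - i := by omega
    rw [he, ih (by omega), Vfun_succ, h i (by omega)]
    rfl

/-- the β-codes for the prefix of `C` -/
noncomputable def dPair (C : LA.Formula (Fin 1)) : ℕ × ℕ :=
  ((beta_lemma (((Pfx C).reverse).map Encodable.encode)).choose,
    (beta_lemma (((Pfx C).reverse).map Encodable.encode)).choose_spec.choose)

lemma dPair_spec (C : LA.Formula (Fin 1)) :
    ∀ i (hi : i < (Pfx C).length), beta (dPair C).1 (dPair C).2 i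
      = Encodable.encode ((Pfx C)[(Pfx C).length - (i+1)]'(by omega)) := by
  intro i hi
  have h := (beta_lemma (((Pfx C).reverse).map Encodable.encode)).choose_spec.choose_spec
  have hi' : i < (((Pfx C).reverse).map Encodable.encode).length := by simpa using hi
  rw [dPair]
  rw [h i hi']
  rw [List.get_eq_getElem, List.getElem_map, List.getElem_reverse]
  simp only [Fin.val_mk]
  exact congrArg Encodable.encode (getElem_idx_congr _ (by omega) _)

/-- the self-referential parameter -/
noncomputable def bC (C : LA.Formula (Fin 1)) : ℕ :=
  Nat.pair (Pfx C).length (Nat.pair (dPair C).1 (dPair C).2)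

lemma val_eq_gnum (C : LA.Formula (Fin 1)) :
    gnum (Gform C (bC C)) = Val (bC C) := by
  rw [gnum, listEncode_Gform, encode_append]
  have hseed : (Encodable.encode ([Sum.inl ⟨2, (num (bC C) : ATm 2)⟩] ++ SFX) : ℕ)
      = Vfun (dPair C).1 (dPair C).2 (Afun (bC C)) 0 := by
    rw [List.singleton_append, encode_cons, stepE, encode_numEntry, Vfun_zero]
    rfl
  rw [hseed]
  have hfold := fold_drop (Pfx C) (dPair C).1 (dPair C).2 (Afun (bC C)) (dPair_spec C)
      (Pfx C).length (le_refl _)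
  rw [Nat.sub_self] at hfold
  rw [List.drop_zero] at hfold
  rw [hfold]
  rw [Val, bC, Nat.unpair_pair]
  rw [Nat.unpair_pair]

end Encoding

section Final
open FirstOrder.Language FirstOrder.Language.BoundedFormula FirstOrder

variable {M : Type} [LA.Structure M]

lemma realize_num_all {α : Type} (v : α → M) (n : ℕ) :
    Term.realize v (num n : LA.Term α) = std n := by
  induction n with
  | zero =>
    show Structure.funMap (L := LA) ArithFunc.zero _ = _
    rw [show (std 0 : M) = mz M from rfl, mz]
    exact congrArg _ (Subsingleton.elim _ _)
  | succ n ih =>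
    show Structure.funMap (L := LA) ArithFunc.succ _ = _
    rw [show (std (n+1) : M) = ms (std n) from rfl, ms, ← ih]
    exact congrArg _ (funext fun i => by fin_cases i <;> rfl)

lemma realize_Atom (b : ℕ) (xs : Fin 2 → M) :
    (Atom b).Realize vE xs ↔ xs 1 = std b := by
  rw [Atom, realize_equal', realize_vr, realize_num_all]

lemma realize_C2 (C : LA.Formula (Fin 1)) (xs : Fin 2 → M) :
    (C2 C).Realize vE xs ↔ Formula.Realize C (fun _ => xs 0) := by
  rw [C2, BoundedFormula.realize_relabel, Formula.Realize]
  have h1 : (Sum.elim vE (xs ∘ Fin.castAdd 0) ∘ (fun _ : Fin 1 => Sum.inr (0 : Fin 2)))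
      = fun _ : Fin 1 => xs 0 := funext fun i => rfl
  have h2 : (xs ∘ Fin.natAdd 2) = (default : Fin 0 → M) := Subsingleton.elim _ _
  rw [h1, h2]

lemma realize_Gform (C : LA.Formula (Fin 1)) (b : ℕ) (xs0 : Fin 0 → M) :
    BoundedFormula.Realize (Gform C b) vE xs0 ↔
      ∃ a : M, Delta.Realize vE (![a, std b] : Fin 2 → M)
        ∧ Formula.Realize C (fun _ => a) := by
  rw [Gform, BoundedFormula.realize_ex]
  constructor
  · rintro ⟨a, ha⟩
    rw [BoundedFormula.realize_ex] at ha
    obtain ⟨a', ha'⟩ := ha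
    have hxs : (Fin.snoc (Fin.snoc xs0 a) a' : Fin 2 → M) = ![a, a'] := by
      funext i; fin_cases i <;> simp
    rw [BoundedFormula.realize_inf, BoundedFormula.realize_inf, hxs, realize_Atom,
      realize_C2] at ha'
    obtain ⟨hd, hc, hat⟩ := ha'
    simp only [Matrix.cons_val_one, Matrix.head_cons] at hat
    subst hat
    refine ⟨a, hd, ?_⟩
    simpa using hc
  · rintro ⟨a, hd, hc⟩
    refine ⟨a, ?_⟩
    rw [BoundedFormula.realize_ex]
    refine ⟨std b, ?_⟩
    have hxs : (Fin.snoc (Fin.snoc xs0 a) (std b) : Fin 2 → M) = ![a, std b] := by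
      funext i; fin_cases i <;> simp
    rw [BoundedFormula.realize_inf, BoundedFormula.realize_inf, hxs, realize_Atom,
      realize_C2]
    refine ⟨hd, by simpa using hc, by simp⟩

end Final

theorem diagonal_lemma' (T : LA.Theory) (hQ : Q ⊆ T)
    (C : LA.Formula (Fin 1)) :
    ∃ G : LA.Sentence,
      T ⊨ᵇ (G ⇔ BoundedFormula.subst C fun _ => (num (gnum G) : LA.Term Empty)) := by
  classical
  refine ⟨Gform C (bC C), ?_⟩
  intro M v xs
  have hmod : ∀ φ ∈ Q, M ⊨ φ := fun φ hφ => Theory.realize_sentence_of_mem T (hQ hφ)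
  have hq : QM M := qm_of_model hmod
  have hv : v = vE := funext fun e => e.elim
  subst hv
  have hxs : xs = (default : Fin 0 → M) := Subsingleton.elim _ _
  subst hxs
  rw [BoundedFormula.realize_iff, BoundedFormula.realize_subst, realize_Gform]
  have hfn : (fun _ : Fin 1 => Term.realize (vE : Empty → M)
      (num (gnum (Gform C (bC C))) : LA.Term Empty)) = (fun _ : Fin 1 => std (Val (bC C))) :=
    funext fun _ => by rw [realize_num_all, val_eq_gnum]
  constructor
  · rintro ⟨a, hd, hc⟩
    rw [delta_repr hq] at hd
    subst hd
    show BoundedFormula.Realize C _ _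
    rw [hfn]
    exact hc
  · intro h
    rw [hfn] at h
    exact ⟨std (Val (bC C)), (delta_repr hq _ _).2 rfl, h⟩


/-- Diagonal (fixed point) lemma: if `T` is a computably axiomatized
extension of Robinson's arithmetic, then for every formula `C(x)` with one free variable
there is a sentence `G` with `T ⊢ G ↔ C(⌜G⌝)`. -/
theorem diagonal_lemma (T : LA.Theory) (hQ : Q ⊆ T) (hax : ComputablyAxiomatized T)
    (C : LA.Formula (Fin 1)) :
    ∃ G : LA.Sentence,
      T ⊨ᵇ (G ⇔ BoundedFormula.subst C fun _ => (num (gnum G) : LA.Term Empty)) :=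
  diagonal_lemma' T hQ C
end

section
/- Gödel's first incompleteness theorem under ω-consistency: if T is an ω-consistent, computably axiomatized extension of Robinson's arithmetic, and G is a sentence with T ⊢ G ↔ ¬Bew(⌜G⌝), then T ⊬ G and T ⊬ ¬G. -/
open FirstOrder FirstOrder.Language

/-- The sentence `Proof(m̄, k̄)`, for a proof-predicate formula `Pr`. -/
def prS (Pr : LA.Formula (Fin 2)) (m k : ℕ) : LA.Sentence :=
  BoundedFormula.subst Pr (![num m, num k] : Fin 2 → LA.Term Empty)

/-- The sentence `Bew(k̄) = ∃z Proof(z, k̄)`, for a proof-predicate formula `Pr`. -/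
noncomputable def bewAt (Pr : LA.Formula (Fin 2)) (k : ℕ) : LA.Sentence :=
  Formula.iExs (Fin 1)
    (BoundedFormula.subst Pr
      (![Term.var (Sum.inr 0), Term.relabel Sum.inl (num k)] : Fin 2 → LA.Term (Empty ⊕ Fin 1)))

/-- `T` is ω-consistent: whenever `T ⊢ ∃x B(x)`, there is a natural number `n` such that
`T` does not prove `¬B(n̄)`. -/
noncomputable def OmegaConsistent (T : LA.Theory) : Prop :=
  ∀ B : LA.Formula (Empty ⊕ Fin 1),
    (T ⊨ᵇ Formula.iExs (Fin 1) B) →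
      ∃ n : ℕ, ¬ T ⊨ᵇ BoundedFormula.not
        (BoundedFormula.subst B
          (Sum.elim Empty.elim fun _ => (num n : LA.Term Empty)))


section Aux

variable {M : Type} [LA.Structure M]

lemma empty_val_eq (v w : Empty → M) : v = w := funext fun e => e.elim

lemma realize_prS (Pr : LA.Formula (Fin 2)) (m k : ℕ) (v : Empty → M) :
    Formula.Realize (prS Pr m k) v ↔
      Pr.Realize (fun i : Fin 2 => Term.realize v (![num m, num k] i)) := by
  simp only [prS, Formula.Realize, BoundedFormula.realize_subst]

lemma realize_bewAt (Pr : LA.Formula (Fin 2)) (k : ℕ) (v : Empty → M) :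
    Formula.Realize (bewAt Pr k) v ↔
      ∃ x : M, Pr.Realize (fun i : Fin 2 =>
        (![Term.var (Sum.inr (0 : Fin 1)), Term.relabel Sum.inl (num k)] i).realize
          (Sum.elim v fun _ => x)) := by
  simp only [bewAt, Formula.Realize, BoundedFormula.realize_iExs, id_eq,
    BoundedFormula.realize_subst]
  constructor
  · rintro ⟨i, hi⟩
    refine ⟨i 0, ?_⟩
    convert hi using 2
    congr 1
    funext a
    rcases a with e | j
    · exact e.elim
    · fin_cases j; rfl
  · rintro ⟨x, hx⟩
    refine ⟨fun _ => x, ?_⟩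
    convert hx using 2

lemma realize_bewAt_iff (Pr : LA.Formula (Fin 2)) (k : ℕ) (v : Empty → M) :
    Formula.Realize (bewAt Pr k) v ↔
      ∃ x : M, Pr.Realize (fun i : Fin 2 =>
        (![Term.var (Sum.inr (0 : Fin 1)), Term.relabel Sum.inl (num k)] i).realize
          (Sum.elim v fun _ => x)) := realize_bewAt Pr k v

lemma realize_body_subst (Pr : LA.Formula (Fin 2)) (n k : ℕ) (v : Empty → M) :
    Formula.Realize (BoundedFormula.subst
        (BoundedFormula.subst Pr
          (![Term.var (Sum.inr 0), Term.relabel Sum.inl (num k)] :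
            Fin 2 → LA.Term (Empty ⊕ Fin 1)))
        (Sum.elim Empty.elim fun _ => (num n : LA.Term Empty))) v
      ↔ Formula.Realize (prS Pr n k) v := by
  simp only [prS, Formula.Realize, BoundedFormula.realize_subst, Term.realize_subst]
  have hv : ∀ a : Fin 2, Term.realize v (![num n, num k] a) =
      Term.realize
        (fun b => Term.realize v
          (Sum.elim Empty.elim (fun _ : Fin 1 => (num n : LA.Term Empty)) b))
        (![Term.var (Sum.inr 0), Term.relabel Sum.inl (num k)] a) := by
    intro a
    fin_cases a
    · simp
    · simp [Term.realize_relabel]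
      congr 1
      exact empty_val_eq _ _
  constructor <;> intro h <;> convert h using 2 <;>
    first | exact hv _ | exact (hv _).symm

end Aux

/-- Gödel's first incompleteness theorem under ω-consistency: if `T` is
an ω-consistent, computably axiomatized extension of Robinson's arithmetic, `Bew` its
standard provability predicate, and `G` a sentence with `T ⊢ G ↔ ¬Bew(⌜G⌝)`, then `T ⊬ G`
and `T ⊬ ¬G`. -/
theorem godel_first_omega (T : LA.Theory) (hQ : Q ⊆ T)
    (hax : ComputablyAxiomatized T) (homega : OmegaConsistent T)
    (Pf : ℕ → ℕ → Prop) (hPfComp : ComputablePred fun p : ℕ × ℕ => Pf p.1 p.2)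
    (hPfAdequate : ∀ A : LA.Sentence, (T ⊨ᵇ A) ↔ ∃ m, Pf m (gnum A))
    (Pr : LA.Formula (Fin 2))
    (hRep : ∀ m k, Pf m k → T ⊨ᵇ prS Pr m k)
    (hRepNot : ∀ m k, ¬ Pf m k → T ⊨ᵇ BoundedFormula.not (prS Pr m k))
    (G : LA.Sentence)
    (hG : T ⊨ᵇ (G ⇔ BoundedFormula.not (bewAt Pr (gnum G)))) :
    ¬ (T ⊨ᵇ G) ∧ ¬ (T ⊨ᵇ BoundedFormula.not G) := by
  classical
  -- consistency of T from omega-consistency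
  have hcon : Nonempty (Theory.ModelType T) := by
    by_contra h
    obtain ⟨n, hn⟩ := homega ⊥ (fun M _ _ => (h ⟨M⟩).elim)
    exact hn (fun M _ _ => (h ⟨M⟩).elim)
  obtain ⟨M0⟩ := hcon
  -- Part 1: T does not prove G
  have part1 : ¬ (T ⊨ᵇ G) := by
    intro hTG
    obtain ⟨m, hm⟩ := (hPfAdequate G).mp hTG
    have hpr := hRep m (gnum G) hm
    -- M0 realizes G, the iff, and prS, hence bewAt, hence ¬G : contradiction
    have hMG : Formula.Realize G (M := M0) (fun e => e.elim) := by
      have := hTG M0 (fun e => e.elim) default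
      simpa [Formula.Realize] using this
    have hMiff := hG M0 (fun e => e.elim) default
    rw [BoundedFormula.realize_iff] at hMiff
    have hMnotbew : ¬ Formula.Realize (bewAt Pr (gnum G)) (M := M0) (fun e => e.elim) := by
      have := hMiff.mp hMG
      simpa [BoundedFormula.realize_not, Formula.Realize] using this
    have hMpr : Formula.Realize (prS Pr m (gnum G)) (M := M0) (fun e => e.elim) :=
      hpr M0 (fun e => e.elim) default
    apply hMnotbew
    rw [realize_bewAt]
    refine ⟨Term.realize (M := M0) (fun e : Empty => e.elim) (num m), ?_⟩
    rw [realize_prS] at hMpr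
    have hv : ∀ i : Fin 2,
        Term.realize (M := M0) (Sum.elim (fun e : Empty => e.elim) fun _ : Fin 1 =>
            Term.realize (fun e : Empty => e.elim) (num m))
          (![Term.var (Sum.inr 0), Term.relabel Sum.inl (num (gnum G))] i)
        = Term.realize (fun e : Empty => e.elim) (![num m, num (gnum G)] i) := by
      intro i
      fin_cases i
      · simp
      · simp [Term.realize_relabel]
    convert hMpr using 2
    all_goals first | exact hv _ | (funext i; exact hv i)
  -- Part 2: T does not prove ¬G
  have part2 : ¬ (T ⊨ᵇ BoundedFormula.not G) := by
    intro hTnG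
    -- no number codes a proof of G
    have hnoPf : ∀ m, ¬ Pf m (gnum G) := by
      intro m hm
      have hTG := (hPfAdequate G).mpr ⟨m, hm⟩
      have h1 := hTG M0 (fun e => e.elim) default
      have h2 := hTnG M0 (fun e => e.elim) default
      rw [BoundedFormula.realize_not] at h2
      exact h2 h1
    -- T proves Bew(⌜G⌝)
    have hTbew : T ⊨ᵇ bewAt Pr (gnum G) := by
      intro M v xs
      have hMiff := hG M v default
      rw [BoundedFormula.realize_iff] at hMiff
      have hMnG := hTnG M v default
      rw [BoundedFormula.realize_not] at hMnG
      have : ¬ (BoundedFormula.not (bewAt Pr (gnum G))).Realize v (default : Fin 0 → M) := by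
        intro hx
        exact hMnG (hMiff.mpr hx)
      rw [BoundedFormula.realize_not, not_not] at this
      convert this using 2
    -- apply omega-consistency
    obtain ⟨n, hn⟩ := homega _ hTbew
    apply hn
    intro M v xs
    obtain rfl : xs = default := Subsingleton.elim _ _
    rw [BoundedFormula.realize_not]
    intro hx
    rw [show BoundedFormula.Realize
        (BoundedFormula.subst
          (BoundedFormula.subst Pr
            (![Term.var (Sum.inr 0), Term.relabel Sum.inl (num (gnum G))] :
              Fin 2 → LA.Term (Empty ⊕ Fin 1)))
          (Sum.elim Empty.elim fun _ => (num n : LA.Term Empty))) v default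
        = Formula.Realize (BoundedFormula.subst
          (BoundedFormula.subst Pr
            (![Term.var (Sum.inr 0), Term.relabel Sum.inl (num (gnum G))] :
              Fin 2 → LA.Term (Empty ⊕ Fin 1)))
          (Sum.elim Empty.elim fun _ => (num n : LA.Term Empty))) v from rfl,
      realize_body_subst] at hx
    have := hRepNot n (gnum G) (hnoPf n) M v default
    rw [BoundedFormula.realize_not] at this
    exact this hx
  exact ⟨part1, part2⟩
end
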